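/- arXiv:1809.04965 — 6 statements merged into one kernel-verified Lean document; each statement's English description precedes it below -/
import Mathlib

section
/- The crystal lowering operator f̃_i, when defined (i.e., not sending T to 0), strictly increases exactly one entry of a semistandard tableau by 1 (changing an i to an i+1), and the result is again a semistandard tableau of the same shape; moreover f̃_i and ẽ_i are inverse where defined: if f̃_i(T) ≠ 0 then ẽ_i(f̃_i(T)) = T. -/
/-- `T` is a semistandard Young tableau of rectangular shape with `k` rows and `d`
columns, with entries in `{1,…,n}`. -/
def IsSSYT (k d n : ℕ) (T : ℕ → ℕ → ℕ) : Prop :=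
  (∀ r c, r < k → c < d → 1 ≤ T r c ∧ T r c ≤ n) ∧
  (∀ r c, r < k → c + 1 < d → T r c ≤ T r (c + 1)) ∧
  (∀ r c, r + 1 < k → c < d → T r c < T (r + 1) c)

/-- The row word of a rectangular tableau with `k` rows and `d` columns: rows are read
left to right, starting from the bottom row.  Position `p` (for `p < k*d`) is the
entry in row `k - 1 - p / d` and column `p % d`. -/
def rowWord (k d : ℕ) (T : ℕ → ℕ → ℕ) (p : ℕ) : ℕ :=
  T (k - 1 - p / d) (p % d)

/-- In the parenthesis pairing for `f̃_i`/`ẽ_i` (each `i` is `)` and each `i+1` is `(`),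
`sCnt` at position `p` is the number of `)`'s minus the number of `('`s among positions
`≤ p` of the row word. -/
def sCnt (k d i : ℕ) (T : ℕ → ℕ → ℕ) (p : ℕ) : ℤ :=
  (((Finset.range (p + 1)).filter fun q => rowWord k d T q = i).card : ℤ) -
  (((Finset.range (p + 1)).filter fun q => rowWord k d T q = i + 1).card : ℤ)

/-- `tCnt` at position `q` is the number of `('`s minus the number of `)`'s among
positions `≥ q` (and `< k*d`) of the row word. -/
def tCnt (k d i : ℕ) (T : ℕ → ℕ → ℕ) (q : ℕ) : ℤ :=
  (((Finset.Ico q (k * d)).filter fun p => rowWord k d T p = i + 1).card : ℤ) -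
  (((Finset.Ico q (k * d)).filter fun p => rowWord k d T p = i).card : ℤ)

/-- `p` is the position of the rightmost unpaired `)` (letter `i`) in the row word:
the first position at which the running excess of `)`'s over `('`s attains its
(positive) maximum. -/
def fCond (k d i : ℕ) (T : ℕ → ℕ → ℕ) (p : ℕ) : Prop :=
  p < k * d ∧ rowWord k d T p = i ∧ 0 < sCnt k d i T p ∧
  (∀ q, q < k * d → sCnt k d i T q ≤ sCnt k d i T p) ∧
  (∀ q, q < p → sCnt k d i T q < sCnt k d i T p)

/-- `q` is the position of the leftmost unpaired `(` (letter `i+1`) in the row word: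
the last position at which the right-to-left excess of `('`s over `)`'s attains its
(positive) maximum. -/
def eCond (k d i : ℕ) (T : ℕ → ℕ → ℕ) (q : ℕ) : Prop :=
  q < k * d ∧ rowWord k d T q = i + 1 ∧ 0 < tCnt k d i T q ∧
  (∀ p, p < k * d → tCnt k d i T p ≤ tCnt k d i T q) ∧
  (∀ p, q < p → p < k * d → tCnt k d i T p < tCnt k d i T q)

open Classical in
/-- The crystal lowering operator `f̃_i`: change the `i` corresponding to the rightmost
unpaired `)` in the row word into an `i+1`; if there is no such `)`, return `none`
(i.e. `0`). -/
noncomputable def ftilde (k d i : ℕ) (T : ℕ → ℕ → ℕ) : Option (ℕ → ℕ → ℕ) :=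
  if h : ∃ p, fCond k d i T p then
    some (fun r c =>
      if r = k - 1 - h.choose / d ∧ c = h.choose % d then i + 1 else T r c)
  else none

open Classical in
/-- The crystal raising operator `ẽ_i`: change the `i+1` corresponding to the leftmost
unpaired `(` in the row word into an `i`; if there is no such `(`, return `none`. -/
noncomputable def etilde (k d i : ℕ) (T : ℕ → ℕ → ℕ) : Option (ℕ → ℕ → ℕ) :=
  if h : ∃ q, eCond k d i T q then
    some (fun r c =>
      if r = k - 1 - h.choose / d ∧ c = h.choose % d then i else T r c)
  else none

section Aux

private def cntv (k d : ℕ) (T : ℕ → ℕ → ℕ) (v a b : ℕ) : ℤ :=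
  (((Finset.Ico a b).filter fun p => rowWord k d T p = v).card : ℤ)

private lemma cntv_split (k d : ℕ) (T : ℕ → ℕ → ℕ) (v : ℕ) {a b c : ℕ}
    (h1 : a ≤ b) (h2 : b ≤ c) :
    cntv k d T v a c = cntv k d T v a b + cntv k d T v b c := by
  unfold cntv
  rw [← Finset.Ico_union_Ico_eq_Ico h1 h2, Finset.filter_union,
    Finset.card_union_of_disjoint
      ((Finset.Ico_disjoint_Ico_consecutive a b c).mono
        (Finset.filter_subset _ _) (Finset.filter_subset _ _))]
  push_cast; ring

private lemma cntv_self (k d : ℕ) (T : ℕ → ℕ → ℕ) (v a : ℕ) :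
    cntv k d T v a a = 0 := by simp [cntv]

private lemma cntv_singleton (k d : ℕ) (T : ℕ → ℕ → ℕ) (v p : ℕ) :
    cntv k d T v p (p + 1) = if rowWord k d T p = v then 1 else 0 := by
  unfold cntv
  rw [Nat.Ico_succ_singleton, Finset.filter_singleton]
  split <;> simp

private lemma sCnt_cntv (k d i : ℕ) (T : ℕ → ℕ → ℕ) (p : ℕ) :
    sCnt k d i T p = cntv k d T i 0 (p + 1) - cntv k d T (i + 1) 0 (p + 1) := by
  unfold sCnt cntv
  rw [Finset.range_eq_Ico]

private lemma tCnt_cntv (k d i : ℕ) (T : ℕ → ℕ → ℕ) (q : ℕ) :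
    tCnt k d i T q = cntv k d T (i + 1) q (k * d) - cntv k d T i q (k * d) := rfl

private lemma rowWord_pos (k d : ℕ) (T : ℕ → ℕ → ℕ) (m c : ℕ) (hd : 0 < d) (hc : c < d) :
    rowWord k d T (d * m + c) = T (k - 1 - m) c := by
  unfold rowWord
  rw [Nat.mul_add_div hd, Nat.div_eq_of_lt hc, Nat.mul_add_mod, Nat.mod_eq_of_lt hc, add_zero]

private lemma row_mono {k d n : ℕ} {T : ℕ → ℕ → ℕ} (hT : IsSSYT k d n T) {r c c' : ℕ}
    (hr : r < k) (h : c ≤ c') (hc' : c' < d) : T r c ≤ T r c' := by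
  obtain ⟨t, rfl⟩ := Nat.exists_eq_add_of_le h
  clear h
  induction t with
  | zero => simp
  | succ m ih =>
    have h1 : c + m ≤ T r (c + m) → True := fun _ => trivial
    have step : T r (c + m) ≤ T r (c + m + 1) := hT.2.1 r (c + m) hr (by omega)
    have : T r c ≤ T r (c + m) := ih (by omega)
    show T r c ≤ T r (c + m + 1)
    omega

end Aux

private lemma sub_inj {k a b : ℕ} (ha : a < k) (hb : b < k)
    (h : k - 1 - a = k - 1 - b) : a = b := by omega

section Ne

private lemma right_ne {k d i : ℕ} {T : ℕ → ℕ → ℕ} {p0 : ℕ}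
    (hp : fCond k d i T p0) (hc : p0 % d + 1 < d) :
    T (k - 1 - p0 / d) (p0 % d + 1) ≠ i := by
  intro hcontra
  obtain ⟨hpN, hWp, hpos, hmax, hstrict⟩ := hp
  have hkd : 0 < k * d := lt_of_le_of_lt (Nat.zero_le _) hpN
  have hd : 0 < d := by
    rcases Nat.eq_zero_or_pos d with rfl | h
    · simp at hkd
    · exact h
  have hqd : p0 / d < k := by
    rw [Nat.div_lt_iff_lt_mul hd]; omega
  have hp0eq : d * (p0 / d) + p0 % d = p0 := Nat.div_add_mod p0 d
  have hW1 : rowWord k d T (p0 + 1) = i := by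
    have := rowWord_pos k d T (p0 / d) (p0 % d + 1) hd hc
    rw [show d * (p0 / d) + (p0 % d + 1) = p0 + 1 by omega] at this
    rw [this]; exact hcontra
  have hp1N : p0 + 1 < k * d := by
    have h1 : d * (p0 / d + 1) ≤ d * k := Nat.mul_le_mul_left d hqd
    have h2 : d * (p0 / d + 1) = d * (p0 / d) + d := by ring
    have h3 : d * k = k * d := Nat.mul_comm d k
    omega
  have hsucc : sCnt k d i T (p0 + 1) = sCnt k d i T p0 + 1 := by
    rw [sCnt_cntv, sCnt_cntv,
      cntv_split k d T i (Nat.zero_le (p0 + 1)) (Nat.le_succ (p0 + 1)),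
      cntv_split k d T (i + 1) (Nat.zero_le (p0 + 1)) (Nat.le_succ (p0 + 1)),
      cntv_singleton, cntv_singleton, if_pos hW1, if_neg (by rw [hW1]; omega)]
    ring
  have := hmax (p0 + 1) hp1N
  omega

private lemma below_ne {k d n i : ℕ} {T : ℕ → ℕ → ℕ} {p0 : ℕ}
    (hT : IsSSYT k d n T) (hp : fCond k d i T p0) (hb : k - 1 - p0 / d + 1 < k) :
    T (k - 1 - p0 / d + 1) (p0 % d) ≠ i + 1 := by
  intro hcontra
  obtain ⟨hpN, hWp, hpos, hmax, hstrict⟩ := hp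
  have hkd : 0 < k * d := lt_of_le_of_lt (Nat.zero_le _) hpN
  have hd : 0 < d := by
    rcases Nat.eq_zero_or_pos d with rfl | h
    · simp at hkd
    · exact h
  have hqd : p0 / d < k := by rw [Nat.div_lt_iff_lt_mul hd]; omega
  have hk : 0 < k := by omega
  set r0 := k - 1 - p0 / d with hr0
  set c0 := p0 % d with hc0
  have hc0d : c0 < d := Nat.mod_lt _ hd
  have hp0eq : d * (p0 / d) + c0 = p0 := Nat.div_add_mod p0 d
  have hqd1 : 1 ≤ p0 / d := by omega
  obtain ⟨m, hm⟩ : ∃ m, p0 / d = m + 1 := ⟨p0 / d - 1, by omega⟩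
  set base := d * m with hbase
  have hbd : base + d = d * (p0 / d) := by rw [hm]; ring
  have hp0eq' : p0 = base + d + c0 := by omega
  have hr0k : r0 < k := by omega
  have hTc0 : T r0 c0 = i := hWp
  -- the row word at positions of row r0 and row r0+1
  have hrW : ∀ c, c < d → rowWord k d T (base + d + c) = T r0 c := by
    intro c hcd
    have := rowWord_pos k d T (p0 / d) c hd hcd
    rw [show d * (p0 / d) + c = base + d + c by omega] at this
    exact this
  have hrW1 : ∀ c, c < d → rowWord k d T (base + c) = T (r0 + 1) c := by
    intro c hcd
    have := rowWord_pos k d T m c hd hcd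
    rw [show (k - 1 - m) = r0 + 1 by omega] at this
    exact this
  -- the leftmost column where row r0 reaches i
  have hex : ∃ c, i ≤ T r0 c := ⟨c0, le_of_eq hTc0.symm⟩
  set cs := Nat.find hex with hcs
  have hcsle : cs ≤ c0 := Nat.find_le (le_of_eq hTc0.symm)
  have hTcs : i ≤ T r0 cs := Nat.find_spec hex
  have hltcs : ∀ c, c < cs → T r0 c < i := fun c hc =>
    not_le.mp (Nat.find_min hex hc)
  have hrow_i : ∀ c, cs ≤ c → c ≤ c0 → T r0 c = i := by
    intro c h1 h2
    have ha : T r0 c ≤ T r0 c0 := row_mono hT hr0k h2 hc0d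
    have hb2 : T r0 cs ≤ T r0 c := row_mono hT hr0k h1 (by omega)
    omega
  have hbel : ∀ c, cs ≤ c → c ≤ c0 → T (r0 + 1) c = i + 1 := by
    intro c h1 h2
    have h3 : T r0 c < T (r0 + 1) c := hT.2.2 r0 c hb (by omega)
    have h4 : T (r0 + 1) c ≤ T (r0 + 1) c0 := row_mono hT (by omega) h2 hc0d
    have h5 := hrow_i c h1 h2
    omega
  have hbelge : ∀ c, cs ≤ c → c < d → i + 1 ≤ T (r0 + 1) c := by
    intro c h1 h2
    have h3 : T (r0 + 1) cs ≤ T (r0 + 1) c := row_mono hT (by omega) h1 h2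
    have h4 := hbel cs le_rfl hcsle
    omega
  set qs := base + cs with hqs
  -- lower bound for the number of (i+1)'s in [qs, p0+1)
  have hA : (c0 + 1 - cs : ℤ) ≤ cntv k d T (i + 1) qs (p0 + 1) := by
    have hsub : (Finset.Ico cs (c0 + 1)).image (fun c => base + c) ⊆
        (Finset.Ico qs (p0 + 1)).filter fun p => rowWord k d T p = i + 1 := by
      intro p hpmem
      simp only [Finset.mem_image, Finset.mem_Ico] at hpmem
      obtain ⟨c, ⟨h1, h2⟩, rfl⟩ := hpmem
      simp only [Finset.mem_filter, Finset.mem_Ico]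
      refine ⟨⟨by omega, by omega⟩, ?_⟩
      rw [hrW1 c (by omega)]
      exact hbel c h1 (by omega)
    have hcard := Finset.card_le_card hsub
    rw [Finset.card_image_of_injective _ (add_right_injective base), Nat.card_Ico] at hcard
    unfold cntv
    have : (c0 + 1 - cs : ℕ) = (c0 + 1 - cs : ℤ) := by push_cast [Nat.cast_sub (by omega : cs ≤ c0 + 1)]; ring
    omega
  -- upper bound for the number of i's in [qs, p0+1)
  have hB : cntv k d T i qs (p0 + 1) ≤ (c0 + 1 - cs : ℤ) := by
    have hsub2 : ((Finset.Ico qs (p0 + 1)).filter fun p => rowWord k d T p = i) ⊆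
        Finset.Ico (base + d + cs) (p0 + 1) := by
      intro p hpmem
      simp only [Finset.mem_filter, Finset.mem_Ico] at hpmem
      obtain ⟨⟨h1, h2⟩, hWi⟩ := hpmem
      simp only [Finset.mem_Ico]
      refine ⟨?_, h2⟩
      by_cases hcase : p < base + d
      · exfalso
        have hc1 : p - base < d := by omega
        have hc2 : cs ≤ p - base := by omega
        have := hrW1 (p - base) hc1
        rw [show base + (p - base) = p by omega] at this
        have := hbelge (p - base) hc2 hc1
        omega
      · by_contra hlt2
        push_neg at hlt2
        have hcol1 : p - (base + d) < cs := by omega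
        have hcol2 : p - (base + d) < d := by omega
        have := hrW (p - (base + d)) hcol2
        rw [show base + d + (p - (base + d)) = p by omega] at this
        have := hltcs (p - (base + d)) hcol1
        omega
    have hcard := Finset.card_le_card hsub2
    rw [Nat.card_Ico] at hcard
    unfold cntv
    omega
  -- assemble the contradiction
  have hqsle : qs ≤ p0 + 1 := by omega
  have hsplit_i := cntv_split k d T i (Nat.zero_le qs) hqsle
  have hsplit_j := cntv_split k d T (i + 1) (Nat.zero_le qs) hqsle
  have hmain : sCnt k d i T p0 ≤ cntv k d T i 0 qs - cntv k d T (i + 1) 0 qs := by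
    rw [sCnt_cntv]
    omega
  rcases Nat.eq_zero_or_pos qs with hqs0 | hqs1
  · rw [hqs0, cntv_self, cntv_self] at hmain
    omega
  · have hpre : cntv k d T i 0 qs - cntv k d T (i + 1) 0 qs = sCnt k d i T (qs - 1) := by
      rw [sCnt_cntv, show qs - 1 + 1 = qs by omega]
    have hlt3 : qs - 1 < p0 := by omega
    have := hstrict (qs - 1) hlt3
    omega

end Ne

/-- If `f̃_i(T) ≠ 0` then `f̃_i(T)` is obtained from `T` by increasing exactly one
entry from `i` to `i+1`; the result is again a semistandard tableau of the same shape,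
and `ẽ_i(f̃_i(T)) = T`. -/
theorem stmt_1 (k d n i : ℕ) (hi : 1 ≤ i) (hin : i < n) (T T' : ℕ → ℕ → ℕ)
    (hT : IsSSYT k d n T) (h : ftilde k d i T = some T') :
    (∃ r c, r < k ∧ c < d ∧ T r c = i ∧ T' r c = i + 1 ∧
      ∀ r' c', r' < k → c' < d → (r', c') ≠ (r, c) → T' r' c' = T r' c') ∧
    IsSSYT k d n T' ∧
    etilde k d i T' = some T := by
  have hEx : ∃ p, fCond k d i T p := by
    by_contra hc
    rw [ftilde, dif_neg hc] at h
    exact nomatch h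
  have hp : fCond k d i T hEx.choose := hEx.choose_spec
  have hT' : T' = fun r c =>
      if r = k - 1 - hEx.choose / d ∧ c = hEx.choose % d then i + 1 else T r c := by
    rw [ftilde, dif_pos hEx] at h
    exact (Option.some_inj.mp h).symm
  obtain ⟨p0, hpc⟩ : ∃ p, hEx.choose = p := ⟨_, rfl⟩
  rw [hpc] at hp hT'
  clear hpc h
  have hpN : p0 < k * d := hp.1
  have hkd : 0 < k * d := lt_of_le_of_lt (Nat.zero_le _) hpN
  have hd : 0 < d := by
    rcases Nat.eq_zero_or_pos d with rfl | hh
    · simp at hkd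
    · exact hh
  have hk : 0 < k := by
    rcases Nat.eq_zero_or_pos k with rfl | hh
    · simp at hkd
    · exact hh
  have hqd : p0 / d < k := by rw [Nat.div_lt_iff_lt_mul hd]; omega
  obtain ⟨r0, hr0⟩ : ∃ a, k - 1 - p0 / d = a := ⟨_, rfl⟩
  obtain ⟨c0, hc00⟩ : ∃ a, p0 % d = a := ⟨_, rfl⟩
  rw [hr0, hc00] at hT'
  have hc0d : c0 < d := by rw [← hc00]; exact Nat.mod_lt _ hd
  have hr0k : r0 < k := by
    rw [← hr0]
    exact lt_of_le_of_lt (Nat.sub_le _ _) (by omega)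
  have hTc0 : T r0 c0 = i := by rw [← hr0, ← hc00]; exact hp.2.1
  -- facts about the neighbours of the changed cell
  have hR : c0 + 1 < d → i + 1 ≤ T r0 (c0 + 1) := by
    intro hcc
    have h1 := right_ne hp (hc00 ▸ hcc)
    rw [hr0, hc00] at h1
    have h2 : T r0 c0 ≤ T r0 (c0 + 1) := hT.2.1 r0 c0 hr0k hcc
    omega
  have hC : r0 + 1 < k → i + 2 ≤ T (r0 + 1) c0 := by
    intro hrr
    have h1 := below_ne hT hp (hr0 ▸ hrr)
    rw [hr0, hc00] at h1
    have h2 : T r0 c0 < T (r0 + 1) c0 := hT.2.2 r0 c0 hrr hc0d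
    omega
  have hT'val : ∀ r c, T' r c = if r = r0 ∧ c = c0 then i + 1 else T r c := by
    intro r c; rw [hT']
  refine ⟨⟨r0, c0, hr0k, hc0d, hTc0, ?_, ?_⟩, ?_, ?_⟩
  · rw [hT'val, if_pos ⟨rfl, rfl⟩]
  · intro r' c' _ _ hne
    rw [hT'val, if_neg]
    rintro ⟨rfl, rfl⟩
    exact hne rfl
  · -- IsSSYT for T'
    refine ⟨?_, ?_, ?_⟩
    · intro r c hr hc
      rw [hT'val]
      split_ifs with h1
      · omega
      · exact hT.1 r c hr hc
    · intro r c hr hc1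
      rw [hT'val, hT'val]
      split_ifs with h1 h2 h2
      · omega
      · rw [h1.1, h1.2]
        exact hR (by omega)
      · have h3 : T r c ≤ T r (c + 1) := hT.2.1 r c hr hc1
        have h4 : T r (c + 1) = i := by rw [h2.1, h2.2]; exact hTc0
        omega
      · exact hT.2.1 r c hr hc1
    · intro r c hr hc
      rw [hT'val, hT'val]
      split_ifs with h1 h2 h2
      · omega
      · rw [h1.1, h1.2]
        have := hC (by omega)
        omega
      · have h3 : T r c < T (r + 1) c := hT.2.2 r c hr hc
        have h4 : T (r + 1) c = i := by rw [h2.1, h2.2]; exact hTc0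
        omega
      · exact hT.2.2 r c hr hc
  · -- etilde (T') = some T
    have hWT'eq : ∀ p, p < k * d → p ≠ p0 → rowWord k d T' p = rowWord k d T p := by
      intro p hpN' hne
      have hpd : p / d < k := by rw [Nat.div_lt_iff_lt_mul hd]; omega
      have hdm1 : d * (p / d) + p % d = p := Nat.div_add_mod p d
      have hdm2 : d * (p0 / d) + p0 % d = p0 := Nat.div_add_mod p0 d
      simp only [rowWord, hT']
      rw [if_neg]
      rintro ⟨ha, hb⟩
      apply hne
      have hab : p / d = p0 / d :=
        sub_inj hpd hqd (by rw [ha, ← hr0])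
      rw [← hdm1, ← hdm2, hab, hc00, hb]
    have hW'p0 : rowWord k d T' p0 = i + 1 := by
      simp only [rowWord, hT']
      rw [if_pos ⟨hr0, hc00⟩]
    have hWp0 : rowWord k d T p0 = i := hp.2.1
    -- filter relations on [q, k*d) for q ≤ p0
    have hfe : ∀ q, q ≤ p0 →
        ((Finset.Ico q (k * d)).filter fun p => rowWord k d T' p = i + 1)
          = insert p0 ((Finset.Ico q (k * d)).filter fun p => rowWord k d T p = i + 1) := by
      intro q hq
      ext p
      simp only [Finset.mem_insert, Finset.mem_filter, Finset.mem_Ico]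
      constructor
      · rintro ⟨hmem, hval⟩
        by_cases hpe : p = p0
        · exact Or.inl hpe
        · exact Or.inr ⟨hmem, by rwa [hWT'eq p hmem.2 hpe] at hval⟩
      · rintro (rfl | ⟨hmem, hval⟩)
        · exact ⟨⟨hq, hpN⟩, hW'p0⟩
        · refine ⟨hmem, ?_⟩
          by_cases hpe : p = p0
          · subst hpe; rw [hWp0] at hval; omega
          · rwa [hWT'eq p hmem.2 hpe]
    have hfi : ∀ q, q ≤ p0 →
        ((Finset.Ico q (k * d)).filter fun p => rowWord k d T' p = i)
          = ((Finset.Ico q (k * d)).filter fun p => rowWord k d T p = i).erase p0 := by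
      intro q hq
      ext p
      simp only [Finset.mem_erase, Finset.mem_filter, Finset.mem_Ico]
      constructor
      · rintro ⟨hmem, hval⟩
        have hpe : p ≠ p0 := by
          rintro rfl; rw [hW'p0] at hval; omega
        exact ⟨hpe, hmem, by rwa [hWT'eq p hmem.2 hpe] at hval⟩
      · rintro ⟨hpe, hmem, hval⟩
        exact ⟨hmem, by rwa [hWT'eq p hmem.2 hpe]⟩
    have htc1 : ∀ q, q ≤ p0 → tCnt k d i T' q = tCnt k d i T q + 2 := by
      intro q hq
      unfold tCnt
      rw [hfe q hq, hfi q hq]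
      have hnm : p0 ∉ (Finset.Ico q (k * d)).filter fun p => rowWord k d T p = i + 1 := by
        simp only [Finset.mem_filter, Finset.mem_Ico]
        rintro ⟨-, hval⟩; rw [hWp0] at hval; omega
      have hmm : p0 ∈ (Finset.Ico q (k * d)).filter fun p => rowWord k d T p = i := by
        simp only [Finset.mem_filter, Finset.mem_Ico]
        exact ⟨⟨hq, hpN⟩, hWp0⟩
      rw [Finset.card_insert_of_notMem hnm, Finset.card_erase_of_mem hmm]
      have hge1 : 1 ≤ ((Finset.Ico q (k * d)).filter fun p => rowWord k d T p = i).card :=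
        Finset.card_pos.mpr ⟨p0, hmm⟩
      push_cast [Nat.cast_sub hge1]
      ring
    have htc2 : ∀ q, p0 < q → tCnt k d i T' q = tCnt k d i T q := by
      intro q hq
      unfold tCnt
      have he1 : ∀ v : ℕ, ((Finset.Ico q (k * d)).filter fun p => rowWord k d T' p = v)
          = (Finset.Ico q (k * d)).filter fun p => rowWord k d T p = v := by
        intro v
        apply Finset.filter_congr
        intro p hpmem
        simp only [Finset.mem_Ico] at hpmem
        rw [hWT'eq p hpmem.2 (by omega)]
      rw [he1, he1]
    -- running-count facts
    have hsf : ∀ p, sCnt k d i T p = cntv k d T i 0 (p + 1) - cntv k d T (i + 1) 0 (p + 1) :=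
      sCnt_cntv k d i T
    have hMpos : 0 < sCnt k d i T p0 := hp.2.2.1
    have htT : ∀ q, q ≤ k * d → tCnt k d i T q
        = (cntv k d T i 0 q - cntv k d T (i + 1) 0 q)
          - (cntv k d T i 0 (k * d) - cntv k d T (i + 1) 0 (k * d)) := by
      intro q hq
      have e1 := cntv_split k d T i (Nat.zero_le q) hq
      have e2 := cntv_split k d T (i + 1) (Nat.zero_le q) hq
      rw [tCnt_cntv]
      omega
    have hfp0 : cntv k d T i 0 p0 - cntv k d T (i + 1) 0 p0 = sCnt k d i T p0 - 1 := by
      have e1 := cntv_split k d T i (Nat.zero_le p0) (by omega : p0 ≤ p0 + 1)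
      have e2 := cntv_split k d T (i + 1) (Nat.zero_le p0) (by omega : p0 ≤ p0 + 1)
      have e3 := cntv_singleton k d T i p0
      have e4 := cntv_singleton k d T (i + 1) p0
      rw [if_pos hWp0] at e3
      rw [if_neg (by rw [hWp0]; omega)] at e4
      have e5 := hsf p0
      omega
    have hfle : ∀ q, q ≤ k * d →
        cntv k d T i 0 q - cntv k d T (i + 1) 0 q ≤ sCnt k d i T p0 := by
      intro q hq
      match q with
      | 0 => rw [cntv_self, cntv_self]; omega
      | (t + 1) =>
        have h6 := hp.2.2.2.1 t (by omega)
        have e5 := hsf t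
        omega
    have hflt : ∀ q, q ≤ p0 →
        cntv k d T i 0 q - cntv k d T (i + 1) 0 q ≤ sCnt k d i T p0 - 1 := by
      intro q hq
      match q with
      | 0 => rw [cntv_self, cntv_self]; omega
      | (t + 1) =>
        have h6 := hp.2.2.2.2 t (by omega)
        have e5 := hsf t
        omega
    have hNle : cntv k d T i 0 (k * d) - cntv k d T (i + 1) 0 (k * d) ≤ sCnt k d i T p0 :=
      hfle (k * d) le_rfl
    -- eCond for T' at p0
    have hecond : eCond k d i T' p0 := by
      refine ⟨hpN, hW'p0, ?_, ?_, ?_⟩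
      · rw [htc1 p0 le_rfl, htT p0 (le_of_lt hpN)]
        omega
      · intro p hpN'
        rcases le_or_gt p p0 with hle | hlt
        · rw [htc1 p hle, htc1 p0 le_rfl, htT p (by omega), htT p0 (by omega)]
          have := hflt p hle
          omega
        · rw [htc2 p hlt, htc1 p0 le_rfl, htT p (by omega), htT p0 (by omega)]
          have := hfle p (by omega)
          omega
      · intro p hgt hpN'
        rw [htc2 p hgt, htc1 p0 le_rfl, htT p (by omega), htT p0 (by omega)]
        have := hfle p (by omega)
        omega
    have hEx' : ∃ q, eCond k d i T' q := ⟨p0, hecond⟩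
    have huniq : ∀ q q', eCond k d i T' q → eCond k d i T' q' → q = q' := by
      intro q q' h1 h2
      by_contra hne
      rcases lt_or_ge q q' with hlt | hge
      · have ha := h1.2.2.2.2 q' hlt h2.1
        have hb := h2.2.2.2.1 q h1.1
        omega
      · have hlt : q' < q := by omega
        have ha := h2.2.2.2.2 q hlt h1.1
        have hb := h1.2.2.2.1 q' h2.1
        omega
    rw [etilde, dif_pos hEx']
    have hch : hEx'.choose = p0 := huniq _ _ hEx'.choose_spec hecond
    rw [hch, hr0, hc00]
    congr 1
    funext r c
    by_cases hb : r = r0 ∧ c = c0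
    · rw [if_pos hb, hb.1, hb.2]
      exact hTc0.symm
    · rw [if_neg hb, hT'val, if_neg hb]
end

section
/- The map f ↦ I(f) is a bijection between the set of (k,n)-bounded affine permutations and the set of (k,n)-Grassmann necklaces. -/
/-- A `(k,n)`-bounded affine permutation: a bijection `f : ℤ → ℤ` with
`f(i+n) = f(i) + n`, `∑_{i=1}^n f(i) = C(n+1,2) + kn`, and `i ≤ f(i) ≤ i + n`. -/
def IsBAP (k n : ℕ) (f : ℤ → ℤ) : Prop :=
  Function.Bijective f ∧ (∀ i, f (i + n) = f i + n) ∧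
  (∑ i ∈ Finset.Icc (1 : ℤ) (n : ℤ), f i) = ((n + 1).choose 2 : ℤ) + (k : ℤ) * n ∧
  ∀ i, i ≤ f i ∧ f i ≤ i + n

/-- The representative in `{1,…,n}` of an integer modulo `n`. -/
def res (n : ℕ) (x : ℤ) : ℕ := ((x - 1) % (n : ℤ) + 1).toNat

/-- The Grassmann necklace of `f`: `I_a = { f(b) mod n : b < a, f(b) ≥ a }` with
representatives taken in `{1,…,n}` (only `b ∈ [a-n, a-1]` can contribute, by
boundedness). -/
noncomputable def necklaceOf (n : ℕ) (f : ℤ → ℤ) : ℕ → Finset ℕ := fun a =>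
  ((Finset.Icc ((a : ℤ) - n) ((a : ℤ) - 1)).filter fun b => (a : ℤ) ≤ f b).image
    fun b => res n (f b)

/-- A `(k,n)`-Grassmann necklace, encoded as an `n`-periodic sequence `I : ℕ → Finset ℕ`
of `k`-element subsets of `{1,…,n}` such that for each `a ∈ {1,…,n}`:
if `a ∉ I_a` then `I_{a+1} = I_a`, and if `a ∈ I_a` then
`I_{a+1} = (I_a \ {a}) ∪ {a'}` for some `a' ∈ {1,…,n}`. -/
def IsGN (k n : ℕ) (I : ℕ → Finset ℕ) : Prop :=
  (∀ a, I (a + n) = I a) ∧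
  (∀ a, I a ⊆ Finset.Icc 1 n ∧ (I a).card = k) ∧
  (∀ a, 1 ≤ a → a ≤ n →
    (a ∉ I a → I (a + 1) = I a) ∧
    (a ∈ I a → ∃ a' ∈ Finset.Icc 1 n, I (a + 1) = insert a' (I a \ {a})))

section Res
variable {n : ℕ} (hn : 0 < n)
include hn

lemma res_coe (x : ℤ) : (res n x : ℤ) = (x - 1) % (n : ℤ) + 1 := by
  have h1 : (0:ℤ) ≤ (x - 1) % (n : ℤ) := Int.emod_nonneg _ (by exact_mod_cast hn.ne')
  show ((( x - 1) % (n:ℤ) + 1).toNat : ℤ) = _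
  rw [Int.toNat_of_nonneg (by linarith)]

lemma res_one_le (x : ℤ) : 1 ≤ res n x := by
  have := res_coe hn x
  have h1 : (0:ℤ) ≤ (x - 1) % (n : ℤ) := Int.emod_nonneg _ (by exact_mod_cast hn.ne')
  omega

lemma res_le (x : ℤ) : res n x ≤ n := by
  have := res_coe hn x
  have h1 : (x - 1) % (n : ℤ) < n := Int.emod_lt_of_pos _ (by exact_mod_cast hn)
  omega

lemma res_dvd (x : ℤ) : (n:ℤ) ∣ x - res n x := by
  rw [res_coe hn]
  have : x - ((x - 1) % (n:ℤ) + 1) = (x-1) - (x-1) % (n:ℤ) := by ring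
  rw [this, Int.emod_def]
  exact ⟨(x-1)/n, by ring⟩

/-- uniqueness: if `r ∈ [1,n]` and `n ∣ x - r` then `res n x = r`. -/
lemma res_eq_of {x : ℤ} {r : ℕ} (h1 : 1 ≤ r) (h2 : r ≤ n) (hd : (n:ℤ) ∣ x - r) :
    res n x = r := by
  have hd2 := res_dvd hn x
  have hd3 : (n:ℤ) ∣ (r:ℤ) - res n x := by
    have : (r:ℤ) - res n x = (x - res n x) - (x - r) := by ring
    rw [this]; exact dvd_sub hd2 hd
  have hb1 := res_one_le hn x
  have hb2 := res_le hn x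
  rcases hd3 with ⟨m, hm⟩
  have hn' : (0:ℤ) < n := by exact_mod_cast hn
  have : m = 0 := by nlinarith [le_abs_self m, neg_abs_le m, abs_nonneg m]
  rw [this] at hm; simp at hm; omega

lemma res_congr {x y : ℤ} (hd : (n:ℤ) ∣ x - y) : res n x = res n y := by
  apply res_eq_of hn (res_one_le hn y) (res_le hn y)
  have := res_dvd hn y
  have h : x - (res n y : ℤ) = (x - y) + (y - res n y) := by ring
  rw [h]; exact dvd_add hd this

lemma res_of_mem {x : ℤ} (h1 : 1 ≤ x) (h2 : x ≤ n) : (res n x : ℤ) = x := by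
  have : res n x = x.toNat := res_eq_of hn (by omega) (by omega) (by simp [Int.toNat_of_nonneg (by omega : (0:ℤ) ≤ x)])
  omega

/-- two integers in a half-open window of length `n` congruent mod `n` are equal. -/
lemma eq_of_modEq_window {x y c : ℤ} (hx1 : c < x) (hx2 : x ≤ c + n) (hy1 : c < y)
    (hy2 : y ≤ c + n) (hd : (n:ℤ) ∣ x - y) : x = y := by
  rcases hd with ⟨m, hm⟩
  have hn' : (0:ℤ) < n := by exact_mod_cast hn
  have : m = 0 := by nlinarith [le_abs_self m, neg_abs_le m, abs_nonneg m]
  rw [this] at hm; simp at hm; omega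

end Res

section Per
variable {n : ℕ} {f : ℤ → ℤ} (hper : ∀ i, f (i + n) = f i + n)
include hper

lemma per_sub (i : ℤ) : f (i - n) = f i - n := by
  have := hper (i - n); simp at this; omega

lemma per_mul (i : ℤ) (m : ℤ) : f (i + m * n) = f i + m * n := by
  induction m using Int.induction_on with
  | zero => simp
  | succ j ih =>
      have h := hper (i + j * n)
      have e : i + (j + 1) * n = (i + j * n) + n := by ring
      rw [e, h, ih]; ring
  | pred j ih =>
      have h := per_sub hper (i + (-j) * n)
      have e : i + (-(j:ℤ) - 1) * n = (i + (-(j:ℤ)) * n) - n := by ring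
      rw [e, h, ih]; ring

end Per

/-- Double counting: for `f` periodic and bounded, the total excedance equals the sum of
window counts. -/
lemma double_count {n : ℕ} {f : ℤ → ℤ} (hn : 0 < n) (hper : ∀ i, f (i + n) = f i + n)
    (hbd : ∀ i, i ≤ f i ∧ f i ≤ i + n) :
    (∑ b ∈ Finset.Icc (1:ℤ) (n:ℤ), (f b - b)) =
      ∑ c ∈ Finset.Icc (1:ℤ) (n:ℤ),
        (((Finset.Icc (c - n) (c - 1)).filter (fun b => c ≤ f b)).card : ℤ) := by
  classical
  set A := (Finset.Icc (1:ℤ) (n:ℤ) ×ˢ Finset.Icc (1-(n:ℤ)) ((n:ℤ)-1)).filter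
      (fun p => p.2 < p.1 ∧ p.1 ≤ f p.2) with hA
  set B := (Finset.Icc (1:ℤ) (n:ℤ) ×ˢ Finset.Icc (1:ℤ) (2*(n:ℤ))).filter
      (fun p => p.1 < p.2 ∧ p.2 ≤ f p.1) with hB
  have hcardAB : A.card = B.card := by
    refine Finset.card_nbij' (fun p => if 1 ≤ p.2 then (p.2, p.1) else (p.2 + n, p.1 + n))
      (fun p => if p.2 ≤ (n:ℤ) then (p.2, p.1) else (p.2 - n, p.1 - n)) ?_ ?_ ?_ ?_
    · rintro ⟨c, b⟩ hp
      simp only [Finset.mem_coe, hA, Finset.mem_filter, Finset.mem_product, Finset.mem_Icc] at hp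
      obtain ⟨⟨⟨hc1, hc2⟩, hb1, hb2⟩, hbc, hcf⟩ := hp
      dsimp only
      by_cases h : 1 ≤ b
      · rw [if_pos h]
        simp only [Finset.mem_coe, hB, Finset.mem_filter, Finset.mem_product, Finset.mem_Icc]
        exact ⟨⟨⟨h, by omega⟩, by omega, by omega⟩, hbc, hcf⟩
      · rw [if_neg h]
        simp only [Finset.mem_coe, hB, Finset.mem_filter, Finset.mem_product, Finset.mem_Icc]
        have hf : f (b + n) = f b + n := hper b
        exact ⟨⟨⟨by omega, by omega⟩, by omega, by omega⟩, by omega, by omega⟩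
    · rintro ⟨b, c⟩ hp
      simp only [Finset.mem_coe, hB, Finset.mem_filter, Finset.mem_product, Finset.mem_Icc] at hp
      obtain ⟨⟨⟨hb1, hb2⟩, hc1, hc2⟩, hbc, hcf⟩ := hp
      have hbd1 := (hbd b).1
      have hbd2 := (hbd b).2
      dsimp only
      by_cases h : c ≤ (n:ℤ)
      · rw [if_pos h]
        simp only [Finset.mem_coe, hA, Finset.mem_filter, Finset.mem_product, Finset.mem_Icc]
        exact ⟨⟨⟨by omega, h⟩, by omega, by omega⟩, hbc, hcf⟩
      · rw [if_neg h]
        simp only [Finset.mem_coe, hA, Finset.mem_filter, Finset.mem_product, Finset.mem_Icc]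
        have hf : f (b - n) = f b - n := per_sub hper b
        exact ⟨⟨⟨by omega, by omega⟩, by omega, by omega⟩, by omega, by omega⟩
    · rintro ⟨c, b⟩ hp
      simp only [Finset.mem_coe, hA, Finset.mem_filter, Finset.mem_product, Finset.mem_Icc] at hp
      obtain ⟨⟨⟨hc1, hc2⟩, hb1, hb2⟩, hbc, hcf⟩ := hp
      dsimp only
      by_cases h : 1 ≤ b
      · simp [h, hbc.le.trans hcf, show c ≤ (n:ℤ) from hc2]
      · have : ¬ (c + n ≤ (n:ℤ)) := by omega
        simp [h, this]
    · rintro ⟨b, c⟩ hp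
      simp only [Finset.mem_coe, hB, Finset.mem_filter, Finset.mem_product, Finset.mem_Icc] at hp
      obtain ⟨⟨⟨hb1, hb2⟩, hc1, hc2⟩, hbc, hcf⟩ := hp
      dsimp only
      by_cases h : c ≤ (n:ℤ)
      · simp [h, hb1]
      · have : ¬ (1 ≤ b - n) := by omega
        simp [h, this]
  have hAcard : A.card = ∑ c ∈ Finset.Icc (1:ℤ) (n:ℤ),
      ((Finset.Icc (c - n) (c - 1)).filter (fun b => c ≤ f b)).card := by
    rw [Finset.card_eq_sum_card_fiberwise (f := fun p => p.1) (t := Finset.Icc (1:ℤ) (n:ℤ))]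
    · apply Finset.sum_congr rfl
      intro c hc
      simp only [Finset.mem_coe, Finset.mem_Icc] at hc
      refine Finset.card_nbij' (fun p => p.2) (fun b => (c, b)) ?_ ?_ ?_ ?_
      · rintro ⟨c', b⟩ hp
        simp only [Finset.mem_coe, hA, Finset.mem_filter, Finset.mem_product, Finset.mem_Icc] at hp
        obtain ⟨⟨⟨⟨hc1, hc2⟩, hb1, hb2⟩, hbc, hcf⟩, rfl⟩ := hp
        have := (hbd b).2
        simp only [Finset.mem_coe, Finset.mem_filter, Finset.mem_Icc]
        exact ⟨⟨by omega, by omega⟩, hcf⟩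
      · intro b hb
        simp only [Finset.mem_coe, Finset.mem_filter, Finset.mem_Icc] at hb
        simp only [Finset.mem_coe, hA, Finset.mem_filter, Finset.mem_product, Finset.mem_Icc]
        refine ⟨⟨⟨⟨hc.1, hc.2⟩, by omega, by omega⟩, by omega, hb.2⟩, by simp⟩
      · rintro ⟨c', b⟩ hp
        simp only [Finset.mem_coe, Finset.mem_filter] at hp
        simp [hp.2]
      · intro b hb; rfl
    · rintro ⟨c, b⟩ hp
      simp only [Finset.mem_coe, hA, Finset.mem_filter, Finset.mem_product] at hp
      exact hp.1.1
  have hBcard : B.card = ∑ b ∈ Finset.Icc (1:ℤ) (n:ℤ), (f b - b).toNat := by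
    rw [Finset.card_eq_sum_card_fiberwise (f := fun p => p.1) (t := Finset.Icc (1:ℤ) (n:ℤ))]
    · apply Finset.sum_congr rfl
      intro b hb
      simp only [Finset.mem_coe, Finset.mem_Icc] at hb
      have h1 : (f b - b).toNat = (Finset.Icc (b+1) (f b)).card := by
        rw [Int.card_Icc]; congr 1; omega
      rw [h1]
      refine Finset.card_nbij' (fun p => p.2) (fun c => (b, c)) ?_ ?_ ?_ ?_
      · rintro ⟨b', c⟩ hp
        simp only [Finset.mem_coe, hB, Finset.mem_filter, Finset.mem_product, Finset.mem_Icc] at hp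
        obtain ⟨⟨⟨⟨hb1, hb2⟩, hc1, hc2⟩, hbc, hcf⟩, rfl⟩ := hp
        simp only [Finset.mem_coe, Finset.mem_Icc]
        omega
      · intro c hc
        simp only [Finset.mem_coe, Finset.mem_Icc] at hc
        have := (hbd b).2
        simp only [Finset.mem_coe, hB, Finset.mem_filter, Finset.mem_product, Finset.mem_Icc]
        refine ⟨⟨⟨⟨hb.1, hb.2⟩, by omega, by omega⟩, by omega, hc.2⟩, by simp⟩
      · rintro ⟨b', c⟩ hp
        simp only [Finset.mem_coe, Finset.mem_filter] at hp
        simp [hp.2]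
      · intro c hc; rfl
    · rintro ⟨b, c⟩ hp
      simp only [Finset.mem_coe, hB, Finset.mem_filter, Finset.mem_product] at hp
      exact hp.1.1
  have : ∑ b ∈ Finset.Icc (1:ℤ) (n:ℤ), (f b - b) =
      ∑ b ∈ Finset.Icc (1:ℤ) (n:ℤ), ((f b - b).toNat : ℤ) := by
    apply Finset.sum_congr rfl
    intro b _
    rw [Int.toNat_of_nonneg (by linarith [(hbd b).1])]
  have key : (∑ b ∈ Finset.Icc (1:ℤ) (n:ℤ), (f b - b).toNat) =
      ∑ c ∈ Finset.Icc (1:ℤ) (n:ℤ),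
        ((Finset.Icc (c - n) (c - 1)).filter (fun b => c ≤ f b)).card := by
    rw [← hBcard, ← hcardAB, hAcard]
  rw [this]
  exact_mod_cast key

lemma periodic_forall {α : Type*} {n : ℕ} (hn : 0 < n) (J : ℕ → α) (P : α → Prop)
    (hper : ∀ a, J (a + n) = J a) (h : ∀ a, 1 ≤ a → a ≤ n → P (J a)) : ∀ a, P (J a) := by
  intro a
  induction a using Nat.strong_induction_on with
  | _ a ih =>
    rcases Nat.lt_or_ge a 1 with h0 | h1
    · have ha : a = 0 := by omega
      subst ha
      have h2 := hper 0
      rw [← h2]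
      simpa using h n hn (le_refl n)
    · rcases le_or_gt a n with h2 | h2
      · exact h a h1 h2
      · have h3 := hper (a - n)
        have e : a - n + n = a := by omega
        rw [e] at h3
        rw [h3]
        exact ih (a - n) (by omega)

section BAP
variable {n : ℕ} {f : ℤ → ℤ} (hn : 0 < n) (hper : ∀ i, f (i + n) = f i + n)
  (hbd : ∀ i, i ≤ f i ∧ f i ≤ i + n)

lemma mem_necklaceOf {r a : ℕ} : r ∈ necklaceOf n f a ↔
    ∃ b : ℤ, ((a:ℤ) - n ≤ b ∧ b ≤ (a:ℤ) - 1 ∧ (a:ℤ) ≤ f b) ∧ res n (f b) = r := by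
  simp [necklaceOf, Finset.mem_image, Finset.mem_filter, Finset.mem_Icc, and_assoc]

include hn in
lemma necklace_subset (a : ℕ) : necklaceOf n f a ⊆ Finset.Icc 1 n := by
  intro r hr
  rw [mem_necklaceOf] at hr
  obtain ⟨b, _, hres⟩ := hr
  rw [← hres]
  exact Finset.mem_Icc.mpr ⟨res_one_le hn _, res_le hn _⟩

include hn hper in
lemma necklace_period (a : ℕ) : necklaceOf n f (a + n) = necklaceOf n f a := by
  ext r
  rw [mem_necklaceOf, mem_necklaceOf]
  constructor
  · rintro ⟨b, ⟨h1, h2, h3⟩, hres⟩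
    push_cast at h1 h2 h3
    refine ⟨b - n, ⟨by omega, by omega, ?_⟩, ?_⟩
    · rw [per_sub hper]; omega
    · rw [← hres]
      exact res_congr hn (by rw [per_sub hper]; exact ⟨-1, by ring⟩)
  · rintro ⟨b, ⟨h1, h2, h3⟩, hres⟩
    refine ⟨b + n, ⟨by push_cast; omega, by push_cast; omega, ?_⟩, ?_⟩
    · rw [hper]; push_cast; omega
    · rw [← hres]
      exact res_congr hn (by rw [hper]; exact ⟨1, by ring⟩)

include hn hper in
lemma resf_inj_window (hinj : Function.Injective f) (a : ℤ) :
    ∀ b ∈ Finset.Icc (a - n) (a - 1), ∀ b' ∈ Finset.Icc (a - n) (a - 1),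
      res n (f b) = res n (f b') → b = b' := by
  intro b hb b' hb' hres
  simp only [Finset.mem_Icc] at hb hb'
  have hd : (n:ℤ) ∣ f b - f b' := by
    have d1 := res_dvd hn (f b)
    have d2 := res_dvd hn (f b')
    have : f b - f b' = (f b - res n (f b)) - (f b' - res n (f b')) := by
      rw [hres]; ring
    rw [this]
    exact dvd_sub d1 d2
  obtain ⟨m, hm⟩ := hd
  have hfb : f (b' + m * n) = f b := by rw [per_mul hper]; linarith [hm]
  have hbb : b' + m * n = b := hinj hfb
  have hn' : (0:ℤ) < n := by exact_mod_cast hn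
  have hm0 : m = 0 := by nlinarith [le_abs_self m, neg_abs_le m, abs_nonneg m]
  rw [hm0] at hbb; simp at hbb; omega

include hn hbd in
lemma res_fb_eq_iff {a : ℕ} (ha1 : 1 ≤ a) (ha2 : a ≤ n) {b : ℤ}
    (hb2 : b ≤ (a:ℤ) - 1) (hfb : (a:ℤ) ≤ f b) : res n (f b) = a ↔ f b = a := by
  have hub := (hbd b).2
  constructor
  · intro h
    have hdv : (n:ℤ) ∣ f b - a := by
      have d1 := res_dvd hn (f b)
      have : ((res n (f b) : ℕ) : ℤ) = (a:ℤ) := by exact_mod_cast h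
      rw [← this]
      exact d1
    obtain ⟨m, hm⟩ := hdv
    have hn' : (0:ℤ) < n := by exact_mod_cast hn
    have hm0 : m = 0 := by nlinarith [le_abs_self m, neg_abs_le m, abs_nonneg m]
    rw [hm0] at hm; simp at hm; omega
  · intro h
    rw [h]
    have := res_of_mem hn (x := (a:ℤ)) (by exact_mod_cast ha1) (by exact_mod_cast ha2)
    exact_mod_cast this

include hn hper hbd in
lemma mem_self_necklace_iff (hinj : Function.Injective f) (hsurj : Function.Surjective f)
    {a : ℕ} (ha1 : 1 ≤ a) (ha2 : a ≤ n) :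
    a ∈ necklaceOf n f a ↔ f a ≠ a := by
  obtain ⟨b₀, hb₀⟩ := hsurj (a:ℤ)
  have hb1 := (hbd b₀).1
  have hb2 := (hbd b₀).2
  rw [hb₀] at hb1 hb2
  rw [mem_necklaceOf]
  constructor
  · rintro ⟨b, ⟨h1, h2, h3⟩, hres⟩ hfa
    have hfb : f b = a := (res_fb_eq_iff hn hbd ha1 ha2 h2 h3).mp hres
    have : b = (a:ℤ) := hinj (by rw [hfb, hfa])
    omega
  · intro hfa
    have hne : b₀ ≠ (a:ℤ) := fun h => hfa (h ▸ hb₀)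
    refine ⟨b₀, ⟨by omega, by omega, by omega⟩, ?_⟩
    exact (res_fb_eq_iff hn hbd ha1 ha2 (by omega) (by omega)).mpr hb₀

include hn hbd in
lemma imageV {a : ℕ} (ha1 : 1 ≤ a) (ha2 : a ≤ n) :
    ((Finset.Icc ((a:ℤ)+1-n) ((a:ℤ)-1)).filter fun b => (a:ℤ)+1 ≤ f b).image
      (fun b => res n (f b)) = necklaceOf n f a \ {a} := by
  ext r
  simp only [Finset.mem_image, Finset.mem_filter, Finset.mem_Icc, Finset.mem_sdiff,
    Finset.mem_singleton, mem_necklaceOf]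
  constructor
  · rintro ⟨b, ⟨⟨h1, h2⟩, h3⟩, hres⟩
    refine ⟨⟨b, ⟨by omega, h2, by omega⟩, hres⟩, ?_⟩
    intro hra
    rw [hra] at hres
    have := (res_fb_eq_iff hn hbd ha1 ha2 h2 (by omega)).mp hres
    omega
  · rintro ⟨⟨b, ⟨h1, h2, h3⟩, hres⟩, hra⟩
    have hfb : f b ≠ (a:ℤ) := by
      intro h
      exact hra (by rw [← hres]; exact (res_fb_eq_iff hn hbd ha1 ha2 h2 h3).mpr h)
    have hb2 := (hbd b).2
    refine ⟨b, ⟨⟨?_, h2⟩, by omega⟩, hres⟩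
    by_contra h
    have : b = (a:ℤ) - n := by omega
    subst this
    omega

include hn hper hbd in
lemma necklace_step_fix (hinj : Function.Injective f) (hsurj : Function.Surjective f)
    {a : ℕ} (ha1 : 1 ≤ a) (ha2 : a ≤ n) (hfa : f a = a) :
    necklaceOf n f (a + 1) = necklaceOf n f a := by
  have hwin : (Finset.Icc (((a:ℕ)+1 : ℕ) - (n:ℤ)) (((a:ℕ)+1 : ℕ) - 1 : ℤ)).filter
      (fun b => (((a:ℕ)+1 : ℕ) : ℤ) ≤ f b) =
      (Finset.Icc ((a:ℤ)+1-n) ((a:ℤ)-1)).filter (fun b => (a:ℤ)+1 ≤ f b) := by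
    ext b
    simp only [Finset.mem_filter, Finset.mem_Icc]
    push_cast
    constructor
    · rintro ⟨⟨h1, h2⟩, h3⟩
      have hba : b ≠ (a:ℤ) := by
        intro h; rw [h, hfa] at h3; omega
      exact ⟨⟨by omega, by omega⟩, by omega⟩
    · rintro ⟨⟨h1, h2⟩, h3⟩
      exact ⟨⟨by omega, by omega⟩, by omega⟩
  show ((Finset.Icc (((a:ℕ)+1 : ℕ) - (n:ℤ)) (((a:ℕ)+1 : ℕ) - 1 : ℤ)).filter
      (fun b => (((a:ℕ)+1 : ℕ) : ℤ) ≤ f b)).image (fun b => res n (f b)) = _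
  rw [hwin, imageV hn hbd ha1 ha2]
  rw [← Finset.erase_eq, Finset.erase_eq_of_notMem]
  rw [mem_self_necklace_iff hn hper hbd hinj hsurj ha1 ha2]
  simp [hfa]

include hn hper hbd in
lemma necklace_step_move {a : ℕ} (ha1 : 1 ≤ a) (ha2 : a ≤ n) (hfa : f a ≠ a) :
    necklaceOf n f (a + 1) = insert (res n (f a)) (necklaceOf n f a \ {a}) := by
  have hwin : (Finset.Icc (((a:ℕ)+1 : ℕ) - (n:ℤ)) (((a:ℕ)+1 : ℕ) - 1 : ℤ)).filter
      (fun b => (((a:ℕ)+1 : ℕ) : ℤ) ≤ f b) =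
      insert (a:ℤ) ((Finset.Icc ((a:ℤ)+1-n) ((a:ℤ)-1)).filter (fun b => (a:ℤ)+1 ≤ f b)) := by
    ext b
    simp only [Finset.mem_filter, Finset.mem_Icc, Finset.mem_insert]
    push_cast
    constructor
    · rintro ⟨⟨h1, h2⟩, h3⟩
      by_cases h : b = (a:ℤ)
      · left; omega
      · right; exact ⟨⟨by omega, by omega⟩, by omega⟩
    · rintro (h | ⟨⟨h1, h2⟩, h3⟩)
      · subst h
        have := (hbd (a:ℤ)).1
        exact ⟨⟨by omega, by omega⟩, by omega⟩
      · exact ⟨⟨by omega, by omega⟩, by omega⟩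
  show ((Finset.Icc (((a:ℕ)+1 : ℕ) - (n:ℤ)) (((a:ℕ)+1 : ℕ) - 1 : ℤ)).filter
      (fun b => (((a:ℕ)+1 : ℕ) : ℤ) ≤ f b)).image (fun b => res n (f b)) = _
  rw [hwin, Finset.image_insert, imageV hn hbd ha1 ha2]

include hn hper hbd in
lemma new_not_in (hinj : Function.Injective f) {a : ℕ} (ha1 : 1 ≤ a) (ha2 : a ≤ n) :
    res n (f a) ∉ necklaceOf n f a \ {a} := by
  rw [Finset.mem_sdiff, mem_necklaceOf]
  rintro ⟨⟨b, ⟨h1, h2, h3⟩, hres⟩, hne⟩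
  have hd : (n:ℤ) ∣ f b - f a := by
    have d1 := res_dvd hn (f b)
    have d2 := res_dvd hn (f (a:ℤ))
    have : f b - f (a:ℤ) = (f b - res n (f b)) - (f (a:ℤ) - res n (f (a:ℤ))) := by
      rw [hres]; ring
    rw [this]
    exact dvd_sub d1 d2
  obtain ⟨m, hm⟩ := hd
  have hfb : f ((a:ℤ) + m * n) = f b := by rw [per_mul hper]; linarith [hm]
  have hbb : (a:ℤ) + m * n = b := hinj hfb
  have hn' : (0:ℤ) < n := by exact_mod_cast hn
  have hm1 : m = -1 := by nlinarith [le_abs_self m, neg_abs_le m, abs_nonneg m]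
  rw [hm1] at hm
  have hfa2 := (hbd (a:ℤ)).2
  have hmm : f b = f (a:ℤ) - n := by linarith [hm]
  have hfb2 : f b = (a:ℤ) := by omega
  apply hne
  rw [Finset.mem_singleton, ← hres]
  exact (res_fb_eq_iff hn hbd ha1 ha2 h2 h3).mpr hfb2

end BAP

lemma sum_Icc_int_eq_nat {M : Type*} [AddCommMonoid M] (n : ℕ) (F : ℤ → M) :
    ∑ c ∈ Finset.Icc (1:ℤ) (n:ℤ), F c = ∑ a ∈ Finset.Icc 1 n, F (a:ℤ) := by
  refine Finset.sum_nbij' (fun c => c.toNat) (fun a => (a:ℤ)) ?_ ?_ ?_ ?_ ?_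
  · intro c hc
    simp only [Finset.mem_Icc] at hc ⊢
    omega
  · intro a ha
    simp only [Finset.mem_Icc] at ha ⊢
    omega
  · intro c hc
    simp only [Finset.mem_Icc] at hc
    omega
  · intro a ha
    simp
  · intro c hc
    simp only [Finset.mem_Icc] at hc
    congr 1
    omega

lemma gauss_nat (n : ℕ) : ∑ a ∈ Finset.Icc 1 n, a = (n+1).choose 2 := by
  induction n with
  | zero => simp
  | succ m ih =>
    rw [Finset.sum_Icc_succ_top (by omega), ih]
    have h1 : (m+2).choose 2 = (m+1).choose 1 + (m+1).choose 2 := Nat.choose_succ_succ _ _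
    rw [Nat.choose_one_right] at h1
    rw [show m+1+1 = m+2 from rfl]
    omega

lemma gauss_int (n : ℕ) : ∑ i ∈ Finset.Icc (1:ℤ) (n:ℤ), i = ((n+1).choose 2 : ℤ) := by
  rw [sum_Icc_int_eq_nat n (fun i => i), ← gauss_nat n]
  push_cast
  rfl

theorem necklace_isGN {k n : ℕ} {f : ℤ → ℤ} (hn : 0 < n) (hbap : IsBAP k n f) :
    IsGN k n (necklaceOf n f) := by
  obtain ⟨⟨hinj, hsurj⟩, hper, hsum, hbd⟩ := hbap
  have hcardW : ∀ a : ℕ, (necklaceOf n f a).card =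
      ((Finset.Icc ((a:ℤ) - n) ((a:ℤ) - 1)).filter fun b => (a:ℤ) ≤ f b).card := by
    intro a
    apply Finset.card_image_of_injOn
    intro b hb b' hb' hres
    exact resf_inj_window hn hper hinj (a:ℤ) b (Finset.filter_subset _ _ hb) b'
      (Finset.filter_subset _ _ hb') hres
  have htot : ∑ a ∈ Finset.Icc 1 n, ((necklaceOf n f a).card : ℤ) = k * n := by
    have hdc := double_count hn hper hbd
    have h1 : ∑ b ∈ Finset.Icc (1:ℤ) (n:ℤ), (f b - b) = (k:ℤ) * n := by
      rw [Finset.sum_sub_distrib, hsum, gauss_int]; ring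
    rw [← h1, hdc, sum_Icc_int_eq_nat]
    apply Finset.sum_congr rfl
    intro a _
    rw [hcardW a]
  have hconst : ∀ a : ℕ, 1 ≤ a → a ≤ n →
      (necklaceOf n f (a+1)).card = (necklaceOf n f a).card := by
    intro a h1 h2
    by_cases hfa : f a = a
    · rw [necklace_step_fix hn hper hbd hinj hsurj h1 h2 hfa]
    · have hmem := (mem_self_necklace_iff hn hper hbd hinj hsurj h1 h2).mpr hfa
      rw [necklace_step_move hn hper hbd h1 h2 hfa,
        Finset.card_insert_of_notMem (new_not_in hn hper hbd hinj h1 h2),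
        ← Finset.erase_eq, Finset.card_erase_of_mem hmem]
      have hpos : 0 < (necklaceOf n f a).card := Finset.card_pos.mpr ⟨a, hmem⟩
      omega
  have hchain : ∀ a : ℕ, 1 ≤ a → a ≤ n → (necklaceOf n f a).card = (necklaceOf n f 1).card := by
    intro a
    induction a with
    | zero => omega
    | succ m ih =>
      intro _ hm
      by_cases hm0 : m = 0
      · subst hm0; rfl
      · rw [hconst m (by omega) (by omega), ih (by omega) (by omega)]
  have hcard1 : (necklaceOf n f 1).card = k := by
    have h2 : ∑ a ∈ Finset.Icc 1 n, ((necklaceOf n f a).card : ℤ) =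
        (n:ℤ) * ((necklaceOf n f 1).card : ℤ) := by
      rw [Finset.sum_congr rfl (fun a ha => by
        rw [hchain a (Finset.mem_Icc.mp ha).1 (Finset.mem_Icc.mp ha).2])]
      rw [Finset.sum_const, Nat.card_Icc, show n + 1 - 1 = n from by omega, nsmul_eq_mul]
    rw [htot] at h2
    have hn' : (n:ℤ) ≠ 0 := by exact_mod_cast hn.ne'
    have h3 : (k:ℤ) = ((necklaceOf n f 1).card : ℤ) := by
      rw [mul_comm] at h2
      exact mul_left_cancel₀ hn' h2
    exact_mod_cast h3.symm
  have hcardk : ∀ a : ℕ, 1 ≤ a → a ≤ n → (necklaceOf n f a).card = k := by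
    intro a h1 h2
    rw [hchain a h1 h2, hcard1]
  refine ⟨necklace_period hn hper, ?_, ?_⟩
  · intro a
    refine ⟨necklace_subset hn a, ?_⟩
    exact periodic_forall hn (necklaceOf n f) (fun s => s.card = k)
      (necklace_period hn hper) hcardk a
  · intro a h1 h2
    constructor
    · intro ha
      have hfa : f a = a := by
        by_contra hfa
        exact ha ((mem_self_necklace_iff hn hper hbd hinj hsurj h1 h2).mpr hfa)
      exact necklace_step_fix hn hper hbd hinj hsurj h1 h2 hfa
    · intro ha
      have hfa : f a ≠ a := (mem_self_necklace_iff hn hper hbd hinj hsurj h1 h2).mp ha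
      exact ⟨res n (f a), Finset.mem_Icc.mpr ⟨res_one_le hn _, res_le hn _⟩,
        necklace_step_move hn hper hbd h1 h2 hfa⟩

theorem necklace_injOn' {k n : ℕ} {f g : ℤ → ℤ} (hn : 0 < n) (hf : IsBAP k n f)
    (hg : IsBAP k n g) (heq : necklaceOf n f = necklaceOf n g) : f = g := by
  obtain ⟨⟨hfinj, hfsurj⟩, hfper, _, hfbd⟩ := hf
  obtain ⟨⟨hginj, hgsurj⟩, hgper, _, hgbd⟩ := hg
  have key : ∀ a : ℕ, 1 ≤ a → a ≤ n → f a = g a := by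
    intro a h1 h2
    by_cases hmem : a ∈ necklaceOf n f a
    · have hmem' : a ∈ necklaceOf n g a := by rw [← heq]; exact hmem
      have hfa : f a ≠ a := (mem_self_necklace_iff hn hfper hfbd hfinj hfsurj h1 h2).mp hmem
      have hga : g a ≠ a := (mem_self_necklace_iff hn hgper hgbd hginj hgsurj h1 h2).mp hmem'
      have e1 := necklace_step_move hn hfper hfbd h1 h2 hfa
      have e2 := necklace_step_move hn hgper hgbd h1 h2 hga
      rw [heq] at e1
      have hx := new_not_in hn hfper hfbd hfinj h1 h2
      rw [heq] at hx
      have hy := new_not_in hn hgper hgbd hginj h1 h2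
      have hres : res n (f a) = res n (g a) := by
        have e3 : insert (res n (f (a:ℤ))) (necklaceOf n g a \ {a}) =
            insert (res n (g (a:ℤ))) (necklaceOf n g a \ {a}) := by rw [← e1, ← e2]
        have h4 : res n (f (a:ℤ)) ∈ insert (res n (g (a:ℤ))) (necklaceOf n g a \ {a}) := by
          rw [← e3]; exact Finset.mem_insert_self _ _
        rcases Finset.mem_insert.mp h4 with h | h
        · exact h
        · exact absurd h hx
      have hd : (n:ℤ) ∣ f a - g a := by
        have d1 := res_dvd hn (f (a:ℤ))
        have d2 := res_dvd hn (g (a:ℤ))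
        have e4 : f (a:ℤ) - g (a:ℤ) =
            (f (a:ℤ) - res n (f (a:ℤ))) - (g (a:ℤ) - res n (g (a:ℤ))) := by
          rw [hres]; ring
        rw [e4]
        exact dvd_sub d1 d2
      have hb1 := (hfbd (a:ℤ)).1
      have hb2 := (hfbd (a:ℤ)).2
      have hb3 := (hgbd (a:ℤ)).1
      have hb4 := (hgbd (a:ℤ)).2
      exact eq_of_modEq_window (c := (a:ℤ)) hn (by omega) (by omega) (by omega) (by omega) hd
    · have hmem' : (a:ℕ) ∉ necklaceOf n g a := by rw [← heq]; exact hmem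
      have hfa : f a = a := by
        by_contra h
        exact hmem ((mem_self_necklace_iff hn hfper hfbd hfinj hfsurj h1 h2).mpr h)
      have hga : g a = a := by
        by_contra h
        exact hmem' ((mem_self_necklace_iff hn hgper hgbd hginj hgsurj h1 h2).mpr h)
      rw [hfa, hga]
  funext i
  have h1 := res_one_le hn i
  have h2 := res_le hn i
  obtain ⟨m, hm⟩ := res_dvd hn i
  have hi : i = (res n i : ℤ) + m * n := by linarith
  rw [hi, per_mul hfper, per_mul hgper, key (res n i) h1 h2]

section GN
open Finset

def pick (I : ℕ → Finset ℕ) (a : ℕ) : ℕ :=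
  if a ∈ I a then (I (a+1) \ (I a \ {a})).sum id else a

variable {k n : ℕ} {I : ℕ → Finset ℕ} (hn : 0 < n) (hI : IsGN k n I)

include hI in
lemma I_add_mul (m a : ℕ) : I (a + m * n) = I a := by
  induction m with
  | zero => simp
  | succ s ih =>
    have : a + (s+1) * n = (a + s * n) + n := by ring
    rw [this, hI.1, ih]

include hn hI in
lemma I_congr {a b : ℕ} (ha : 1 ≤ a) (hb : 1 ≤ b) (hd : (n:ℤ) ∣ (a:ℤ) - (b:ℤ)) :
    I a = I b := by
  obtain ⟨m, hm⟩ := hd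
  have hn' : (0:ℤ) < n := by exact_mod_cast hn
  rcases le_total a b with h | h
  · have hab : (a:ℤ) ≤ b := by exact_mod_cast h
    have hm0 : m ≤ 0 := by nlinarith
    have huz : (((-m).toNat : ℕ) : ℤ) = -m := Int.toNat_of_nonneg (by omega)
    have hb2 : b = a + (-m).toNat * n := by
      have : (b:ℤ) = (a:ℤ) + (((-m).toNat : ℕ) : ℤ) * n := by rw [huz]; linarith
      exact_mod_cast this
    rw [hb2, I_add_mul hI]
  · have hab : (b:ℤ) ≤ a := by exact_mod_cast h
    have hm0 : 0 ≤ m := by nlinarith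
    have huz : ((m.toNat : ℕ) : ℤ) = m := Int.toNat_of_nonneg (by omega)
    have ha2 : a = b + m.toNat * n := by
      have : (a:ℤ) = (b:ℤ) + ((m.toNat : ℕ) : ℤ) * n := by rw [huz]; linarith
      exact_mod_cast this
    rw [ha2, I_add_mul hI]

include hI in
lemma pick_spec {a : ℕ} (ha1 : 1 ≤ a) (ha2 : a ≤ n) (hmem : a ∈ I a) :
    pick I a ∈ Finset.Icc 1 n ∧ pick I a ∉ I a \ {a} ∧
      I (a+1) = insert (pick I a) (I a \ {a}) := by
  obtain ⟨a', ha', hIa⟩ := (hI.2.2 a ha1 ha2).2 hmem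
  have hcard1 : (I (a+1)).card = k := (hI.2.1 (a+1)).2
  have hcardA : (I a).card = k := (hI.2.1 a).2
  have hkpos : 1 ≤ k := by
    rw [← hcardA]
    exact Finset.card_pos.mpr ⟨a, hmem⟩
  have hnotin : a' ∉ I a \ {a} := by
    intro h
    rw [hIa, Finset.insert_eq_self.mpr h, ← Finset.erase_eq,
      Finset.card_erase_of_mem hmem, hcardA] at hcard1
    omega
  have hpick : pick I a = a' := by
    unfold pick
    rw [if_pos hmem, hIa, Finset.insert_sdiff_cancel hnotin, Finset.sum_singleton]
    rfl
  rw [hpick]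
  exact ⟨ha', hnotin, hIa⟩

lemma pick_not {a : ℕ} (hmem : a ∉ I a) : pick I a = a := by
  unfold pick; rw [if_neg hmem]

include hI in
lemma step_not {a : ℕ} (ha1 : 1 ≤ a) (ha2 : a ≤ n) (hmem : a ∉ I a) : I (a+1) = I a :=
  (hI.2.2 a ha1 ha2).1 hmem

include hn hI in
lemma pick_mem_Icc {a : ℕ} (ha1 : 1 ≤ a) (ha2 : a ≤ n) : pick I a ∈ Finset.Icc 1 n := by
  by_cases hmem : a ∈ I a
  · exact (pick_spec hI ha1 ha2 hmem).1
  · rw [pick_not hmem]; exact Finset.mem_Icc.mpr ⟨ha1, ha2⟩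

include hn in
lemma mrep_one_le (a : ℕ) : 1 ≤ (a-1) % n + 1 := by omega

include hn in
lemma mrep_le (a : ℕ) : (a-1) % n + 1 ≤ n := by
  have := Nat.mod_lt (a-1) hn
  omega

include hn in
lemma mrep_dvd {a : ℕ} (ha : 1 ≤ a) : (n:ℤ) ∣ (a:ℤ) - (((a-1) % n + 1 : ℕ) : ℤ) := by
  have h := Nat.mod_add_div (a-1) n
  refine ⟨((a-1)/n : ℕ), ?_⟩
  have h3 : (((a-1:ℕ)):ℤ) = (((a-1)%n : ℕ) : ℤ) + (n:ℤ) * (((a-1)/n : ℕ) : ℤ) := by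
    exact_mod_cast h.symm
  have h4 : (((a-1:ℕ)):ℤ) = (a:ℤ) - 1 := by omega
  push_cast
  linarith

include hn in
lemma mrep_self {a : ℕ} (ha1 : 1 ≤ a) (ha2 : a ≤ n) : (a-1) % n + 1 = a := by
  rw [Nat.mod_eq_of_lt (by omega)]
  omega

include hn hI in
lemma trans_at {a : ℕ} (ha : 1 ≤ a) :
    (((a-1) % n + 1) ∉ I a → I (a+1) = I a) ∧
    (((a-1) % n + 1) ∈ I a → pick I ((a-1) % n + 1) ∉ I a \ {(a-1) % n + 1} ∧
      I (a+1) = insert (pick I ((a-1) % n + 1)) (I a \ {(a-1) % n + 1})) := by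
  set m := (a-1) % n + 1 with hm
  have hm1 : 1 ≤ m := mrep_one_le hn a
  have hm2 : m ≤ n := mrep_le hn a
  have hIa : I a = I m := I_congr hn hI ha hm1 (mrep_dvd hn ha)
  have hIa1 : I (a+1) = I (m+1) := by
    apply I_congr hn hI (by omega) (by omega)
    have := mrep_dvd hn ha
    push_cast
    push_cast at this
    convert this using 1
    rw [hm]; push_cast; ring
  rw [hIa, hIa1]
  constructor
  · intro h; exact step_not hI hm1 hm2 h
  · intro h; exact ⟨(pick_spec hI hm1 hm2 h).2.1, (pick_spec hI hm1 hm2 h).2.2⟩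

include hn hI in
lemma persist {a r : ℕ} (ha : 1 ≤ a) (hr : r ∈ I a)
    (hcase : r ≠ (a-1) % n + 1 ∨ pick I r = r) : r ∈ I (a+1) := by
  set m := (a-1) % n + 1 with hm
  by_cases hmem : m ∈ I a
  · rw [((trans_at hn hI ha).2 hmem).2]
    by_cases hrm : r = m
    · rcases hcase with h | h
      · exact absurd hrm h
      · subst hrm
        rw [h]
        exact Finset.mem_insert_self _ _
    · exact Finset.mem_insert_of_mem (Finset.mem_sdiff.mpr ⟨hr, by simp only [Finset.mem_singleton]; exact hrm⟩)
  · rw [(trans_at hn hI ha).1 hmem]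
    exact hr

include hn hI in
lemma enter {a r : ℕ} (ha : 1 ≤ a) (h1 : r ∉ I a) (h2 : r ∈ I (a+1)) :
    ((a-1) % n + 1) ∈ I a ∧ pick I ((a-1) % n + 1) = r := by
  set m := (a-1) % n + 1 with hm
  by_cases hmem : m ∈ I a
  · refine ⟨hmem, ?_⟩
    rw [((trans_at hn hI ha).2 hmem).2] at h2
    rcases Finset.mem_insert.mp h2 with h | h
    · exact h.symm
    · exact absurd (Finset.mem_sdiff.mp h).1 h1
  · rw [(trans_at hn hI ha).1 hmem] at h2
    exact absurd h2 h1

include hn hI in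
lemma leave {a r : ℕ} (ha : 1 ≤ a) (h1 : r ∈ I a) (h2 : r ∉ I (a+1)) :
    r = (a-1) % n + 1 := by
  by_contra hne
  exact h2 (persist hn hI ha h1 (Or.inl hne))

include hn hI in
lemma propagate {r : ℕ} (hpr : pick I r = r) :
    ∀ (a t : ℕ), 1 ≤ a → r ∈ I a → r ∈ I (a + t) := by
  intro a t
  induction t with
  | zero => intro _ h; exact h
  | succ s ih =>
    intro ha h
    exact persist hn hI (a := a + s) (by omega) (ih ha h) (Or.inr hpr)

end GN

section GN2
open Finset

variable {k n : ℕ} {I : ℕ → Finset ℕ} (hn : 0 < n) (hI : IsGN k n I)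

include hn hI in
lemma enter_unique {r a b : ℕ} (ha : a ∈ Finset.Icc 1 n) (hb : b ∈ Finset.Icc 1 n)
    (hEa : r ∉ I a ∧ r ∈ I (a+1)) (hEb : r ∉ I b ∧ r ∈ I (b+1)) : a = b := by
  classical
  by_contra hab
  set E := (Finset.Icc 1 n).filter (fun c => r ∉ I c ∧ r ∈ I (c+1)) with hE
  set L := (Finset.Icc 1 n).filter (fun c => r ∈ I c ∧ r ∉ I (c+1)) with hL
  set g : ℕ → ℤ := fun j => if r ∈ I j then 1 else 0 with hg
  have htel : (E.card : ℤ) = L.card := by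
    have h1 : ∑ i ∈ Finset.range n, (g (i+1+1) - g (i+1)) = g (n+1) - g (0+1) :=
      Finset.sum_range_sub (fun i => g (i+1)) n
    have h2 : I (n+1) = I 1 := by
      have h3 := hI.1 1
      rw [show n+1 = 1+n from by omega]
      exact h3
    have h4 : g (n+1) - g (0+1) = 0 := by rw [hg]; simp only [h2]; simp
    have h5 : ∑ i ∈ Finset.range n, (g (i+1+1) - g (i+1)) =
        ∑ c ∈ Finset.Icc 1 n, (g (c+1) - g c) := by
      refine Finset.sum_nbij' (fun i => i+1) (fun c => c-1) ?_ ?_ ?_ ?_ ?_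
      · intro i hi; simp only [Finset.mem_range] at hi; simp only [Finset.mem_Icc]; omega
      · intro c hc; simp only [Finset.mem_Icc] at hc; simp only [Finset.mem_range]; omega
      · intro i hi; simp
      · intro c hc; simp only [Finset.mem_Icc] at hc; omega
      · intro i hi; rfl
    have h6 : ∑ c ∈ Finset.Icc 1 n, (g (c+1) - g c) =
        ∑ c ∈ Finset.Icc 1 n, ((if c ∈ E then (1:ℤ) else 0) - (if c ∈ L then 1 else 0)) := by
      apply Finset.sum_congr rfl
      intro c hc
      have hcE : c ∈ E ↔ (r ∉ I c ∧ r ∈ I (c+1)) := by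
        rw [hE, Finset.mem_filter]; exact ⟨fun h => h.2, fun h => ⟨hc, h⟩⟩
      have hcL : c ∈ L ↔ (r ∈ I c ∧ r ∉ I (c+1)) := by
        rw [hL, Finset.mem_filter]; exact ⟨fun h => h.2, fun h => ⟨hc, h⟩⟩
      by_cases hic : r ∈ I c <;> by_cases hic1 : r ∈ I (c+1) <;>
        simp [hg, hcE, hcL, hic, hic1]
    have hfE : (Finset.Icc 1 n).filter (fun c => c ∈ E) = E := by
      ext c
      simp only [Finset.mem_filter]
      exact ⟨fun h => h.2, fun h => ⟨(Finset.mem_filter.mp h).1, h⟩⟩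
    have hfL : (Finset.Icc 1 n).filter (fun c => c ∈ L) = L := by
      ext c
      simp only [Finset.mem_filter]
      exact ⟨fun h => h.2, fun h => ⟨(Finset.mem_filter.mp h).1, h⟩⟩
    have h7 : ∑ c ∈ Finset.Icc 1 n, ((if c ∈ E then (1:ℤ) else 0) - (if c ∈ L then 1 else 0))
        = (E.card : ℤ) - L.card := by
      rw [Finset.sum_sub_distrib, Finset.sum_boole, Finset.sum_boole, hfE, hfL]
    rw [h5, h6, h7, h4] at h1
    linarith [h1]
  have hL1 : L ⊆ {r} := by
    intro c hc
    rw [hL, Finset.mem_filter, Finset.mem_Icc] at hc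
    obtain ⟨⟨hc1, hc2⟩, hcr, hcr1⟩ := hc
    have h8 := leave hn hI (by omega : 1 ≤ c) hcr hcr1
    rw [mrep_self hn hc1 hc2] at h8
    simp [h8]
  have hLcard : L.card ≤ 1 := by
    calc L.card ≤ ({r} : Finset ℕ).card := Finset.card_le_card hL1
    _ = 1 := Finset.card_singleton r
  have hE2 : 1 < E.card := by
    apply Finset.one_lt_card.mpr
    exact ⟨a, Finset.mem_filter.mpr ⟨ha, hEa⟩, b, Finset.mem_filter.mpr ⟨hb, hEb⟩, hab⟩
  omega

include hn hI in
lemma pick_enters {c r : ℕ} (h1 : 1 ≤ c) (h2 : c ≤ n) (hp : pick I c = r) (hcr : c ≠ r) :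
    r ∉ I c ∧ r ∈ I (c+1) := by
  have hcI : c ∈ I c := by
    by_contra h
    rw [pick_not h] at hp
    exact hcr hp
  obtain ⟨hicc, hnotin, hstep⟩ := pick_spec hI h1 h2 hcI
  rw [hp] at hnotin hstep
  constructor
  · intro hrIc
    refine hnotin (Finset.mem_sdiff.mpr ⟨hrIc, ?_⟩)
    simp only [Finset.mem_singleton]
    exact fun h => hcr h.symm
  · rw [hstep]; exact Finset.mem_insert_self _ _

include hn hI in
lemma pick_injOn : ∀ a ∈ Finset.Icc 1 n, ∀ b ∈ Finset.Icc 1 n,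
    pick I a = pick I b → a = b := by
  have main : ∀ a ∈ Finset.Icc 1 n, ∀ b ∈ Finset.Icc 1 n,
      pick I a = pick I b → a = pick I a → a ≠ b → False := by
    intro a ha b hb hpe har hne
    obtain ⟨hb1, hb2⟩ := Finset.mem_Icc.mp hb
    set r := pick I a with hr
    have har' : a = r := har
    have hbr : b ≠ r := fun h => hne (har'.trans h.symm)
    have hpr : pick I r = r := by rw [← har']; exact hr.symm.trans har'.symm
    have hEb := pick_enters hn hI hb1 hb2 (hpe.symm.trans hr.symm) hbr
    obtain ⟨hrb, hrb1⟩ := hEb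
    have hprop := propagate hn hI hpr (b+1) (n-1) (by omega) hrb1
    have he : b + 1 + (n-1) = b + n := by omega
    rw [he, hI.1 b] at hprop
    exact hrb hprop
  intro a ha b hb hpe
  by_contra hne
  obtain ⟨ha1, ha2⟩ := Finset.mem_Icc.mp ha
  obtain ⟨hb1, hb2⟩ := Finset.mem_Icc.mp hb
  by_cases har : a = pick I a
  · exact main a ha b hb hpe har hne
  · by_cases hbr : b = pick I b
    · exact main b hb a ha hpe.symm hbr (Ne.symm hne)
    · have hEa := pick_enters hn hI ha1 ha2 rfl har
      have hEb := pick_enters hn hI hb1 hb2 hpe.symm (fun h => hbr (h.trans hpe))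
      exact hne (enter_unique hn hI ha hb hEa hEb)

include hn hI in
lemma pick_surjOn : ∀ r ∈ Finset.Icc 1 n, ∃ c ∈ Finset.Icc 1 n, pick I c = r := by
  have himg : (Finset.Icc 1 n).image (pick I) = Finset.Icc 1 n := by
    apply Finset.eq_of_subset_of_card_le
    · intro r hrm
      obtain ⟨c, hc, hpc⟩ := Finset.mem_image.mp hrm
      rw [← hpc]
      exact pick_mem_Icc hn hI (Finset.mem_Icc.mp hc).1 (Finset.mem_Icc.mp hc).2
    · rw [Finset.card_image_of_injOn]
      intro x hx y hy hxy
      exact pick_injOn hn hI x (by exact_mod_cast hx) y (by exact_mod_cast hy) hxy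
  intro r hrm
  rw [← himg] at hrm
  obtain ⟨c, hc, hpc⟩ := Finset.mem_image.mp hrm
  exact ⟨c, hc, hpc⟩

end GN2

section FOF
open Finset

def FF (n : ℕ) (I : ℕ → Finset ℕ) (a : ℕ) : ℤ :=
  if a ∈ I a then (a:ℤ) + 1 + ((pick I a : ℤ) - a - 1) % n else (a:ℤ)

noncomputable def fOf (n : ℕ) (I : ℕ → Finset ℕ) : ℤ → ℤ :=
  fun i => FF n I (res n i) + (i - res n i)

variable {k n : ℕ} {I : ℕ → Finset ℕ} (hn : 0 < n) (hI : IsGN k n I)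

include hn in
lemma FF_bounds (a : ℕ) : (a:ℤ) ≤ FF n I a ∧ FF n I a ≤ (a:ℤ) + n := by
  unfold FF
  split
  · have h1 : (0:ℤ) ≤ ((pick I a : ℤ) - a - 1) % n := Int.emod_nonneg _ (by exact_mod_cast hn.ne')
    have h2 : ((pick I a : ℤ) - a - 1) % n < n := Int.emod_lt_of_pos _ (by exact_mod_cast hn)
    omega
  · have : (0:ℤ) ≤ n := by exact_mod_cast Nat.zero_le n
    omega

include hn in
lemma FF_gt {a : ℕ} (hmem : a ∈ I a) : (a:ℤ) < FF n I a := by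
  unfold FF
  rw [if_pos hmem]
  have h1 : (0:ℤ) ≤ ((pick I a : ℤ) - a - 1) % n := Int.emod_nonneg _ (by exact_mod_cast hn.ne')
  omega

lemma FF_eq {a : ℕ} (hmem : a ∉ I a) : FF n I a = (a:ℤ) := by
  unfold FF; rw [if_neg hmem]

lemma FF_dvd (a : ℕ) : (n:ℤ) ∣ FF n I a - (pick I a : ℤ) := by
  unfold FF
  by_cases hmem : a ∈ I a
  · rw [if_pos hmem]
    refine ⟨-(((pick I a : ℤ) - a - 1) / n), ?_⟩
    rw [Int.emod_def]
    ring
  · rw [if_neg hmem, pick_not hmem]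
    simp

include hn in
lemma fOf_per : ∀ i, fOf n I (i + n) = fOf n I i + n := by
  intro i
  unfold fOf
  have h : res n (i + n) = res n i := res_congr hn ⟨1, by ring⟩
  rw [h]
  ring

include hn in
lemma fOf_bd : ∀ i, i ≤ fOf n I i ∧ fOf n I i ≤ i + n := by
  intro i
  have hb := FF_bounds (I := I) hn (res n i)
  unfold fOf
  omega

include hn hI in
lemma fOf_res (i : ℤ) : res n (fOf n I i) = pick I (res n i) := by
  have h1 := res_one_le hn i
  have h2 := res_le hn i
  have hicc := pick_mem_Icc hn hI h1 h2
  rw [Finset.mem_Icc] at hicc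
  apply res_eq_of hn hicc.1 hicc.2
  have d1 := FF_dvd (n := n) (I := I) (res n i)
  have d2 := res_dvd hn i
  have : fOf n I i - (pick I (res n i) : ℤ) =
      (FF n I (res n i) - (pick I (res n i) : ℤ)) + (i - res n i) := by
    unfold fOf; ring
  rw [this]
  exact dvd_add d1 d2

include hn in
lemma fOf_nat {a : ℕ} (ha1 : 1 ≤ a) (ha2 : a ≤ n) : fOf n I (a:ℤ) = FF n I a := by
  unfold fOf
  have h : (res n (a:ℤ) : ℤ) = (a:ℤ) := res_of_mem hn (by exact_mod_cast ha1) (by exact_mod_cast ha2)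
  have h2 : res n (a:ℤ) = a := by exact_mod_cast h
  rw [h2]
  omega

include hn hI in
lemma fOf_inj : Function.Injective (fOf n I) := by
  intro i j h
  have hres : pick I (res n i) = pick I (res n j) := by
    rw [← fOf_res hn hI, ← fOf_res hn hI, h]
  have hrr : res n i = res n j := by
    apply pick_injOn hn hI _ (Finset.mem_Icc.mpr ⟨res_one_le hn i, res_le hn i⟩)
      _ (Finset.mem_Icc.mpr ⟨res_one_le hn j, res_le hn j⟩) hres
  have hd := res_dvd hn i
  have hd2 := res_dvd hn j
  unfold fOf at h
  rw [hrr] at h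
  omega

include hn hI in
lemma fOf_surj : Function.Surjective (fOf n I) := by
  intro y
  obtain ⟨c, hc, hpc⟩ := pick_surjOn hn hI (res n y)
    (Finset.mem_Icc.mpr ⟨res_one_le hn y, res_le hn y⟩)
  obtain ⟨hc1, hc2⟩ := Finset.mem_Icc.mp hc
  have h1 : (n:ℤ) ∣ y - fOf n I (c:ℤ) := by
    have d1 := res_dvd hn y
    have d2 := FF_dvd (n := n) (I := I) c
    have d3 : fOf n I (c:ℤ) = FF n I c := fOf_nat hn hc1 hc2
    rw [hpc] at d2
    have : y - fOf n I (c:ℤ) = (y - res n y) - (FF n I c - (res n y : ℤ)) := by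
      rw [d3]; ring
    rw [this]
    exact dvd_sub d1 d2
  obtain ⟨m, hm⟩ := h1
  refine ⟨(c:ℤ) + m * n, ?_⟩
  rw [per_mul (fOf_per hn) (c:ℤ) m]
  linarith [hm]

end FOF

section INV
open Finset

variable {k n : ℕ} {I : ℕ → Finset ℕ} (hn : 0 < n) (hI : IsGN k n I)

include hn hI in
lemma invariant {c : ℕ} (hc1 : 1 ≤ c) (hc2 : c ≤ n) :
    ∀ t : ℕ, 1 ≤ t → t ≤ n → (pick I c ∈ I (c + t) ↔ ((c + t : ℕ) : ℤ) ≤ FF n I c) := by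
  intro t
  induction t with
  | zero => intro h; omega
  | succ s ih =>
    intro _ hs
    by_cases hs0 : s = 0
    · subst hs0
      have hcast : ((c + (0+1) : ℕ) : ℤ) = (c:ℤ) + 1 := by push_cast; ring
      rw [hcast, show c + (0+1) = c + 1 from by omega]
      by_cases hmem : c ∈ I c
      · obtain ⟨hicc, hnotin, hstep⟩ := pick_spec hI hc1 hc2 hmem
        constructor
        · intro _
          have := FF_gt hn hmem
          omega
        · intro _
          rw [hstep]
          exact Finset.mem_insert_self _ _
      · have hFF := FF_eq (n := n) (I := I) hmem
        have hstep := step_not hI hc1 hc2 hmem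
        constructor
        · intro h
          rw [hstep, pick_not hmem] at h
          exact absurd h hmem
        · intro h
          rw [hFF] at h
          omega
    · have hs1 : 1 ≤ s := by omega
      have hih0 := ih hs1 (by omega)
      set a := c + s with ha
      have ha1 : 1 ≤ a := by omega
      have hacast : ((a : ℕ) : ℤ) = (c:ℤ) + s := by rw [ha]; push_cast; ring
      have hih : pick I c ∈ I a ↔ (c:ℤ) + s ≤ FF n I c := by
        rw [← hacast]; exact hih0
      set m := (a - 1) % n + 1 with hm
      have hm1 : 1 ≤ m := mrep_one_le hn a
      have hm2 : m ≤ n := mrep_le hn a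
      have hmd : (n:ℤ) ∣ (a:ℤ) - (m:ℤ) := mrep_dvd hn ha1
      have hmc : m ≠ c := by
        intro h
        have hds : (n:ℤ) ∣ (s:ℤ) := by
          have e : (s:ℤ) = (a:ℤ) - (m:ℤ) := by rw [h, hacast]; ring
          rw [e]; exact hmd
        have hle : (n:ℤ) ≤ (s:ℤ) := Int.le_of_dvd (by exact_mod_cast hs1) hds
        omega
      have hFdvd := FF_dvd (n := n) (I := I) c
      have hFb := FF_bounds (n := n) (I := I) hn c
      have hpicc := pick_mem_Icc hn hI hc1 hc2
      rw [Finset.mem_Icc] at hpicc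
      suffices h : pick I c ∈ I (a+1) ↔ (c:ℤ) + s + 1 ≤ FF n I c by
        have e1 : c + (s+1) = a + 1 := by omega
        have e2 : ((c + (s+1) : ℕ) : ℤ) = (c:ℤ) + s + 1 := by push_cast; ring
        rw [e2, e1]
        exact h
      by_cases hα : (c:ℤ) + s + 1 ≤ FF n I c
      · have hLa : pick I c ∈ I a := hih.mpr (by omega)
        have hcm : pick I c ≠ m := by
          intro h
          have hd2 : (n:ℤ) ∣ FF n I c - ((c:ℤ) + s) := by
            have e : FF n I c - ((c:ℤ) + s) =
                (FF n I c - (pick I c : ℤ)) + (((m:ℕ) : ℤ) - (a:ℤ)) := by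
              rw [← h, hacast]; ring
            rw [e]
            exact dvd_add hFdvd (by rw [← neg_sub]; exact dvd_neg.mpr (mrep_dvd hn ha1))
          have := eq_of_modEq_window (c := (c:ℤ)) hn (by omega) (by omega)
            (by omega) (by omega) hd2
          omega
        constructor
        · intro _; omega
        · intro _
          exact persist hn hI (a := a) ha1 hLa (Or.inl hcm)
      · rcases eq_or_lt_of_le (show FF n I c ≤ (c:ℤ) + s from by omega) with hβ | hγ
        · -- FF = c + s : both sides false
          have hpcm : pick I c = m := by
            have hd2 : (n:ℤ) ∣ (pick I c : ℤ) - (m : ℤ) := by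
              have e : (pick I c : ℤ) - (m:ℤ) =
                  (-(FF n I c - (pick I c : ℤ))) + ((a:ℤ) - (m:ℤ)) + (FF n I c - ((c:ℤ)+s)) := by
                rw [hacast]; ring
              have hz : FF n I c - ((c:ℤ) + s) = 0 := by omega
              rw [e, hz, add_zero]
              exact dvd_add (dvd_neg.mpr hFdvd) hmd
            have := eq_of_modEq_window (c := (0:ℤ)) hn
              (by exact_mod_cast hpicc.1) (by simp; exact_mod_cast hpicc.2)
              (by exact_mod_cast hm1) (by simp; exact_mod_cast hm2) hd2
            exact_mod_cast this
          constructor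
          · intro hmem2
            exfalso
            have hmIa : m ∈ I a := by rw [← hpcm]; exact hih.mpr (by omega)
            have hmImm : m ∈ I m := by rw [← I_congr hn hI ha1 hm1 hmd]; exact hmIa
            obtain ⟨_, hnotin2, hstep2⟩ := pick_spec hI hm1 hm2 hmImm
            have hpmm : pick I m ≠ m := by
              intro hpm
              apply hmc
              exact pick_injOn hn hI m (Finset.mem_Icc.mpr ⟨hm1, hm2⟩) c
                (Finset.mem_Icc.mpr ⟨hc1, hc2⟩) (by rw [hpm, hpcm])
            have hIa1 : I (a+1) = I (m+1) := by
              apply I_congr hn hI (by omega) (by omega)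
              have : ((a+1 : ℕ) : ℤ) - ((m+1 : ℕ) : ℤ) = (a:ℤ) - m := by push_cast; ring
              rw [this]; exact hmd
            rw [hIa1, hstep2, hpcm] at hmem2
            rcases Finset.mem_insert.mp hmem2 with h | h
            · exact hpmm h.symm
            · exact (Finset.mem_sdiff.mp h).2 (Finset.mem_singleton_self m)
          · intro h; exfalso; omega
        · -- FF < c + s : both sides false
          have hnotIa : pick I c ∉ I a := fun h => by
            have := hih.mp h; omega
          constructor
          · intro hmem2
            exfalso
            obtain ⟨hmIa, hpm⟩ := enter hn hI ha1 hnotIa hmem2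
            exact hmc (pick_injOn hn hI m (Finset.mem_Icc.mpr ⟨hm1, hm2⟩) c
              (Finset.mem_Icc.mpr ⟨hc1, hc2⟩) (by rw [hpm]))
          · intro h; exfalso; omega

end INV

section FINAL
open Finset

variable {k n : ℕ} {I : ℕ → Finset ℕ} (hn : 0 < n) (hI : IsGN k n I)

include hn hI in
lemma necklace_fOf_core {a : ℕ} (ha1 : 1 ≤ a) (ha2 : a ≤ n) :
    necklaceOf n (fOf n I) a = I a := by
  ext r
  rw [mem_necklaceOf]
  constructor
  · rintro ⟨b, ⟨h1, h2, h3⟩, hres⟩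
    set c := res n b with hc
    have hc1 := res_one_le hn b
    have hc2 := res_le hn b
    obtain ⟨u, hu⟩ := res_dvd hn b
    have hfb : fOf n I b = FF n I c + (b - c) := rfl
    have hres2 : res n (fOf n I b) = pick I c := fOf_res hn hI b
    set t : ℕ := ((a:ℤ) - b).toNat with ht
    have htz2 : (t:ℤ) = (a:ℤ) - b := Int.toNat_of_nonneg (by omega)
    have ht1 : 1 ≤ t := by omega
    have ht2 : t ≤ n := by omega
    have hIct : I (c + t) = I a := by
      apply I_congr hn hI (by omega) (by omega)
      have e : ((c + t:ℕ):ℤ) - a = -(b - (c:ℤ)) := by push_cast; omega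
      rw [e]
      exact dvd_neg.mpr ⟨u, hu⟩
    have hFFc : ((c + t :ℕ):ℤ) ≤ FF n I c := by
      rw [hfb] at h3
      push_cast
      omega
    have hmem := (invariant hn hI hc1 hc2 t ht1 ht2).mpr hFFc
    rw [hIct] at hmem
    rw [← hres, hres2]
    exact hmem
  · intro hr
    have hrIcc := (hI.2.1 a).1 hr
    obtain ⟨c, hcm, hpc⟩ := pick_surjOn hn hI r hrIcc
    obtain ⟨hc1, hc2⟩ := Finset.mem_Icc.mp hcm
    set t : ℕ := if c < a then a - c else a + n - c with ht
    have ht1 : 1 ≤ t := by rw [ht]; split <;> omega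
    have ht2 : t ≤ n := by rw [ht]; split <;> omega
    have hctn : c + t = a ∨ c + t = a + n := by rw [ht]; split <;> omega
    have hct : (n:ℤ) ∣ ((c + t:ℕ):ℤ) - a := by
      rcases hctn with h | h
      · rw [h]; simp
      · rw [h]; push_cast; exact ⟨1, by ring⟩
    have hIct : I (c + t) = I a := I_congr hn hI (by omega) (by omega) hct
    have hmem : pick I c ∈ I (c + t) := by rw [hIct, hpc]; exact hr
    have hFFc := (invariant hn hI hc1 hc2 t ht1 ht2).mp hmem
    set b : ℤ := (a:ℤ) - t with hb
    have hresb : res n b = c := by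
      apply res_eq_of hn hc1 hc2
      have e : b - (c:ℤ) = -( ((c + t:ℕ):ℤ) - a ) := by rw [hb]; push_cast; ring
      rw [e]
      exact dvd_neg.mpr hct
    have hfb : fOf n I b = FF n I c + (b - c) := by
      unfold fOf
      rw [hresb]
    have hFb := FF_bounds (n := n) (I := I) hn c
    refine ⟨b, ⟨by omega, by omega, ?_⟩, ?_⟩
    · rw [hfb]
      push_cast at hFFc
      omega
    · rw [fOf_res hn hI b, hresb, hpc]

include hn hI in
lemma necklace_fOf : necklaceOf n (fOf n I) = I := by
  funext a
  have := periodic_forall hn (fun a => (necklaceOf n (fOf n I) a, I a))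
    (fun p => p.1 = p.2)
    (fun a => by
      simp only [Prod.mk.injEq]
      exact ⟨necklace_period hn (fOf_per hn) a, hI.1 a⟩)
    (fun a h1 h2 => necklace_fOf_core hn hI h1 h2)
  exact this a

include hn hI in
lemma fOf_isBAP : IsBAP k n (fOf n I) := by
  refine ⟨⟨fOf_inj hn hI, fOf_surj hn hI⟩, fOf_per hn, ?_, fOf_bd hn⟩
  have hdc := double_count hn (fOf_per (I := I) hn) (fOf_bd (I := I) hn)
  have hcard : ∀ a:ℕ, 1 ≤ a → a ≤ n →
      (((Finset.Icc ((a:ℤ)-n) ((a:ℤ)-1)).filter (fun b => (a:ℤ) ≤ fOf n I b)).card) = k := by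
    intro a h1 h2
    have himg : (necklaceOf n (fOf n I) a).card =
        (((Finset.Icc ((a:ℤ)-n) ((a:ℤ)-1)).filter (fun b => (a:ℤ) ≤ fOf n I b)).card) := by
      apply Finset.card_image_of_injOn
      intro b hb b' hb' hres
      exact resf_inj_window hn (fOf_per hn) (fOf_inj hn hI) (a:ℤ) b
        (Finset.filter_subset _ _ hb) b' (Finset.filter_subset _ _ hb') hres
    rw [← himg, necklace_fOf hn hI]
    exact (hI.2.1 a).2
  have h2 : ∑ c ∈ Finset.Icc (1:ℤ) (n:ℤ),
      ((((Finset.Icc (c-n) (c-1)).filter (fun b => c ≤ fOf n I b)).card : ℤ)) = (k:ℤ) * n := by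
    rw [sum_Icc_int_eq_nat]
    rw [Finset.sum_congr rfl (fun a ha => by
      rw [hcard a (Finset.mem_Icc.mp ha).1 (Finset.mem_Icc.mp ha).2])]
    rw [Finset.sum_const, Nat.card_Icc, show n + 1 - 1 = n from by omega, nsmul_eq_mul]
    ring
  rw [h2] at hdc
  have h3 : ∑ i ∈ Finset.Icc (1:ℤ) (n:ℤ), fOf n I i =
      (∑ i ∈ Finset.Icc (1:ℤ) (n:ℤ), (fOf n I i - i)) + ∑ i ∈ Finset.Icc (1:ℤ) (n:ℤ), i := by
    rw [← Finset.sum_add_distrib]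
    apply Finset.sum_congr rfl
    intro i _
    ring
  rw [h3, hdc, gauss_int]
  ring

end FINAL


/-- The map `f ↦ I(f)` is a bijection between `(k,n)`-bounded affine permutations and
`(k,n)`-Grassmann necklaces. -/
theorem stmt_2 (k n : ℕ) (hn : 0 < n) (hk : k ≤ n) :
    Set.BijOn (necklaceOf n) {f | IsBAP k n f} {I | IsGN k n I} := by
  refine ⟨?_, ?_, ?_⟩
  · intro f hf
    exact necklace_isGN hn hf
  · intro f hf g hg h
    exact necklace_injOn' hn hf hg h
  · intro I hI
    exact ⟨fOf n I, fOf_isBAP hn hI, necklace_fOf hn hI⟩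
end

section
/- For a (k,n)-bounded affine permutation f with Grassmann necklace (I_1,...,I_n), each set I_a defined by I_a = { f(b) mod n : b < a, f(b) ≥ a } has exactly k elements. -/
private lemma per {n : ℕ} {f : ℤ → ℤ} (hp : ∀ i, f (i + n) = f i + n) :
    ∀ (m : ℤ) (x : ℤ), f (x + n * m) = f x + n * m := by
  intro m
  induction m using Int.induction_on with
  | zero => simp
  | succ m ih =>
      intro x
      have h0 : x + (n : ℤ) * (m + 1) = (x + n * m) + n := by ring
      rw [h0, hp, ih]; ring
  | pred m ih =>
      intro x
      have h0 : x + (n : ℤ) * (-m - 1) + n = x + n * (-m) := by ring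
      have := hp (x + (n : ℤ) * (-m - 1))
      rw [h0, ih] at this
      linarith

private noncomputable def NN (n : ℕ) (f : ℤ → ℤ) (a : ℤ) : ℕ :=
  ((Finset.Icc (a - n) (a - 1)).filter fun b => a ≤ f b).card

private lemma NN_succ {k n : ℕ} {f : ℤ → ℤ} (hn : 0 < n) (hf : IsBAP k n f) (a : ℤ) :
    NN n f (a + 1) = NN n f a := by
  obtain ⟨hbij, hp, hsum, hb⟩ := hf
  classical
  set T := (Finset.Icc (a + 1 - n) (a - 1)).filter (fun b => a + 1 ≤ f b) with hT
  set P := (Finset.Icc (a - n) (a - 1)).filter (fun b => f b = a) with hPdef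
  have hcardP : P.card = if f a = a then 0 else 1 := by
    split_ifs with hfa
    · rw [Finset.card_eq_zero, Finset.eq_empty_iff_forall_notMem]
      intro b hbP
      simp only [hPdef, Finset.mem_filter, Finset.mem_Icc] at hbP
      have : b = a := hbij.injective (by rw [hbP.2, hfa])
      omega
    · obtain ⟨p, hpa⟩ := hbij.surjective a
      have hP1 : P = {p} := by
        rw [Finset.eq_singleton_iff_unique_mem]
        constructor
        · simp only [hPdef, Finset.mem_filter, Finset.mem_Icc]
          have h1 := (hb p).1
          have h2 := (hb p).2
          have hpna : p ≠ a := fun h => hfa (h ▸ hpa)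
          refine ⟨⟨?_, ?_⟩, hpa⟩ <;> omega
        · intro b hbP
          simp only [hPdef, Finset.mem_filter, Finset.mem_Icc] at hbP
          exact hbij.injective (by rw [hbP.2, hpa])
      rw [hP1, Finset.card_singleton]
  have h2 : NN n f a = T.card + (if f a = a then 0 else 1) := by
    rw [← hcardP]
    have hun : (Finset.Icc (a - (n:ℤ)) (a - 1)).filter (fun b => a ≤ f b) = T ∪ P := by
      ext b
      simp only [hT, hPdef, Finset.mem_union, Finset.mem_filter, Finset.mem_Icc]
      have h1 := (hb b).1
      have h2 := (hb b).2
      omega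
    have hdisj : Disjoint T P := by
      rw [Finset.disjoint_left]
      intro b hb1 hb2
      simp only [hT, hPdef, Finset.mem_filter, Finset.mem_Icc] at hb1 hb2
      omega
    rw [NN, hun, Finset.card_union_of_disjoint hdisj]
  have h1 : NN n f (a + 1) = T.card + (if f a = a then 0 else 1) := by
    rw [NN, show a + 1 - 1 = a from by ring]
    split_ifs with hfa
    · rw [add_zero]
      congr 1
      ext b
      simp only [hT, Finset.mem_filter, Finset.mem_Icc]
      constructor
      · rintro ⟨⟨hb1, hb2⟩, hb3⟩
        refine ⟨⟨by omega, ?_⟩, hb3⟩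
        rcases eq_or_lt_of_le hb2 with rfl | h
        · omega
        · omega
      · rintro ⟨⟨hb1, hb2⟩, hb3⟩
        exact ⟨⟨by omega, by omega⟩, hb3⟩
    · have hfa' : a + 1 ≤ f a := by have := (hb a).1; omega
      have : (Finset.Icc (a + 1 - (n:ℤ)) a).filter (fun b => a + 1 ≤ f b)
          = insert a T := by
        ext b
        simp only [hT, Finset.mem_insert, Finset.mem_filter, Finset.mem_Icc]
        constructor
        · rintro ⟨⟨hb1, hb2⟩, hb3⟩
          rcases eq_or_lt_of_le hb2 with h | h
          · left; omega
          · right; exact ⟨⟨by omega, by omega⟩, hb3⟩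
        · rintro (rfl | ⟨⟨hb1, hb2⟩, hb3⟩)
          · exact ⟨⟨by omega, by omega⟩, hfa'⟩
          · exact ⟨⟨by omega, by omega⟩, hb3⟩
      rw [this, Finset.card_insert_of_notMem]
      simp only [hT, Finset.mem_filter, Finset.mem_Icc]
      omega
  rw [h1, h2]

private lemma card_necklace {k n : ℕ} {f : ℤ → ℤ} (hn : 0 < n) (hf : IsBAP k n f) (a : ℕ) :
    (necklaceOf n f a).card = NN n f (a : ℤ) := by
  obtain ⟨hbij, hp, hsum, hb⟩ := hf
  rw [necklaceOf, NN]
  apply Finset.card_image_of_injOn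
  intro b hb1 c hc1 hres
  simp only [Finset.coe_filter, Set.mem_setOf_eq, Finset.mem_Icc] at hb1 hc1
  have hnz : (n : ℤ) ≠ 0 := by exact_mod_cast hn.ne'
  have e1 := Int.emod_nonneg (f b - 1) hnz
  have e2 := Int.emod_nonneg (f c - 1) hnz
  have hres' : res n (f b) = res n (f c) := hres
  have hmod : (f b - 1) % (n : ℤ) = (f c - 1) % (n : ℤ) := by
    unfold res at hres'
    omega
  have hdvd : (n : ℤ) ∣ (f c - 1) - (f b - 1) := Int.ModEq.dvd hmod
  obtain ⟨m, hm⟩ := hdvd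
  have hfc : f c = f b + (n : ℤ) * m := by linarith
  have : f (b + (n : ℤ) * m) = f c := by rw [per hp m b]; linarith
  have hcb : c = b + (n : ℤ) * m := (hbij.injective this).symm
  have hm0 : m = 0 := by
    by_contra hm0
    rcases lt_or_gt_of_ne hm0 with h | h
    · have : (n : ℤ) * m ≤ n * (-1) := by
        apply mul_le_mul_of_nonneg_left (by omega) (by positivity)
      omega
    · have : (n : ℤ) * 1 ≤ n * m := by
        apply mul_le_mul_of_nonneg_left (by omega) (by positivity)
      omega
  rw [hm0, mul_zero, add_zero] at hcb
  exact hcb.symm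

private lemma gauss (n : ℕ) : (∑ i ∈ Finset.Icc (1 : ℤ) (n : ℤ), i) = ((n + 1).choose 2 : ℤ) := by
  induction n with
  | zero => simp
  | succ n ih =>
      have h : Finset.Icc (1 : ℤ) ((n + 1 : ℕ) : ℤ) = insert ((n:ℤ)+1) (Finset.Icc (1:ℤ) (n:ℤ)) := by
        ext x
        simp only [Finset.mem_insert, Finset.mem_Icc]
        push_cast
        omega
      rw [h, Finset.sum_insert (by simp), ih, Nat.choose_succ_succ (n+1) 1]
      push_cast [Nat.choose_one_right]
      ring

private lemma NN_split {k n : ℕ} {f : ℤ → ℤ} (hn : 0 < n) (hf : IsBAP k n f)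
    {a : ℤ} (ha1 : 1 ≤ a) (ha2 : a ≤ n) :
    NN n f a = ((Finset.Icc (1:ℤ) (n:ℤ)).filter fun b => b < a ∧ a ≤ f b).card
      + ((Finset.Icc (1:ℤ) (n:ℤ)).filter fun b => a ≤ b ∧ a + n ≤ f b).card := by
  obtain ⟨hbij, hp, hsum, hb⟩ := hf
  classical
  set S := (Finset.Icc (a - (n:ℤ)) (a - 1)).filter (fun b => a ≤ f b) with hS
  have key := Finset.card_filter_add_card_filter_not (s := S) (p := fun b => 1 ≤ b)
  have E1 : S.filter (fun b => 1 ≤ b)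
      = (Finset.Icc (1:ℤ) (n:ℤ)).filter (fun b => b < a ∧ a ≤ f b) := by
    ext b
    simp only [hS, Finset.filter_filter, Finset.mem_filter, Finset.mem_Icc]
    omega
  have E2 : (S.filter (fun b => ¬ 1 ≤ b)).image (· + (n:ℤ))
      = (Finset.Icc (1:ℤ) (n:ℤ)).filter (fun b => a ≤ b ∧ a + n ≤ f b) := by
    ext c
    simp only [hS, Finset.mem_image, Finset.filter_filter, Finset.mem_filter, Finset.mem_Icc]
    constructor
    · rintro ⟨b, ⟨⟨hb1, hb2⟩, hb3, hb4⟩, rfl⟩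
      have := hp b
      omega
    · rintro ⟨⟨hc1, hc2⟩, hc3, hc4⟩
      refine ⟨c - n, ⟨⟨?_, ?_⟩, ?_, ?_⟩, by ring⟩ <;>
        [skip; skip; (have := hp (c - n); rw [sub_add_cancel] at this; omega); skip] <;> omega
  have hcard2 : (S.filter (fun b => ¬ 1 ≤ b)).card
      = ((Finset.Icc (1:ℤ) (n:ℤ)).filter (fun b => a ≤ b ∧ a + n ≤ f b)).card := by
    rw [← E2, Finset.card_image_of_injective _ (add_left_injective _)]
  rw [NN, ← key, E1, hcard2]

private lemma sum_NN {k n : ℕ} {f : ℤ → ℤ} (hn : 0 < n) (hf : IsBAP k n f) :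
    (∑ a ∈ Finset.Icc (1:ℤ) (n:ℤ), (NN n f a : ℤ)) = (k : ℤ) * n := by
  obtain ⟨hbij, hp, hsum, hb⟩ := hf
  classical
  have step1 : ∀ a ∈ Finset.Icc (1:ℤ) (n:ℤ), (NN n f a : ℤ)
      = ∑ b ∈ Finset.Icc (1:ℤ) (n:ℤ),
          ((if b < a ∧ a ≤ f b then (1:ℤ) else 0) + (if a ≤ b ∧ a + n ≤ f b then (1:ℤ) else 0)) := by
    intro a ha
    simp only [Finset.mem_Icc] at ha
    rw [NN_split hn ⟨hbij, hp, hsum, hb⟩ ha.1 ha.2, Finset.sum_add_distrib,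
      Finset.sum_boole, Finset.sum_boole]
    push_cast
    ring
  rw [Finset.sum_congr rfl step1, Finset.sum_comm]
  have step2 : ∀ b ∈ Finset.Icc (1:ℤ) (n:ℤ),
      (∑ a ∈ Finset.Icc (1:ℤ) (n:ℤ),
        ((if b < a ∧ a ≤ f b then (1:ℤ) else 0) + (if a ≤ b ∧ a + n ≤ f b then (1:ℤ) else 0)))
      = f b - b := by
    intro b hbm
    simp only [Finset.mem_Icc] at hbm
    have h1 := (hb b).1
    have h2 := (hb b).2
    rw [Finset.sum_add_distrib, Finset.sum_boole, Finset.sum_boole]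
    have F1 : (Finset.Icc (1:ℤ) (n:ℤ)).filter (fun a => b < a ∧ a ≤ f b)
        = Finset.Ioc b (min (n:ℤ) (f b)) := by
      ext a
      simp only [Finset.mem_filter, Finset.mem_Icc, Finset.mem_Ioc, le_min_iff]
      omega
    have F2 : (Finset.Icc (1:ℤ) (n:ℤ)).filter (fun a => a ≤ b ∧ a + n ≤ f b)
        = Finset.Icc 1 (f b - n) := by
      ext a
      simp only [Finset.mem_filter, Finset.mem_Icc]
      omega
    rw [F1, F2, Int.card_Ioc, Int.card_Icc]
    rcases le_total (n:ℤ) (f b) with h | h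
    · rw [min_eq_left h]; omega
    · rw [min_eq_right h]; omega
  rw [Finset.sum_congr rfl step2, Finset.sum_sub_distrib, hsum]
  rw [gauss]
  ring

/-- For a `(k,n)`-bounded affine permutation `f`, each member
`I_a = { f(b) mod n : b < a, f(b) ≥ a }` of the Grassmann necklace of `f` has exactly
`k` elements. -/
theorem stmt_3 (k n : ℕ) (hn : 0 < n) (f : ℤ → ℤ) (hf : IsBAP k n f) :
    ∀ a, 1 ≤ a → a ≤ n → (necklaceOf n f a).card = k := by
  intro a ha1 ha2
  have hconst : ∀ m : ℕ, NN n f (1 + m) = NN n f 1 := by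
    intro m
    induction m with
    | zero => simp
    | succ m ih =>
        rw [show ((1:ℤ) + ((m+1 : ℕ) : ℤ)) = (1 + (m:ℤ)) + 1 from by push_cast; ring,
          NN_succ hn hf (1 + (m:ℤ)), ih]
  have hc2 : ∀ x : ℤ, 1 ≤ x → NN n f x = NN n f 1 := by
    intro x hx
    have h := hconst (x - 1).toNat
    rwa [show (1:ℤ) + (((x-1).toNat : ℕ) : ℤ) = x from by omega] at h
  have hsum := sum_NN hn hf
  have hconstsum : (∑ a ∈ Finset.Icc (1:ℤ) (n:ℤ), (NN n f a : ℤ))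
      = (n : ℤ) * (NN n f 1 : ℤ) := by
    rw [Finset.sum_congr rfl (fun x hx => by
      simp only [Finset.mem_Icc] at hx
      rw [hc2 x hx.1])]
    rw [Finset.sum_const, Int.card_Icc]
    rw [show ((n:ℤ) + 1 - 1).toNat = n from by omega]
    rw [nsmul_eq_mul]
  have hk : (NN n f 1 : ℤ) = (k : ℤ) := by
    have hn' : ((n : ℤ)) ≠ 0 := by exact_mod_cast hn.ne'
    have : (n : ℤ) * (NN n f 1 : ℤ) = (n : ℤ) * (k : ℤ) := by
      rw [← hconstsum, hsum]; ring
    exact mul_left_cancel₀ hn' this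
  rw [card_necklace hn hf a, hc2 _ (by exact_mod_cast ha1)]
  exact_mod_cast hk
end

section
/- Let (τ,T) be a (k,n)-partial noncrossing pairing, and define θ(τ,T) = (I_1,I_2) where I_1 ∩ I_2 = T and for each pair (a,b) ∈ τ with a < b we put a ∈ I_1 and b ∈ I_2. Then (I_1,I_2) is a standard pair, i.e., I_1 and I_2 form the two columns of a semistandard tableau of shape 2^k; moreover θ is a bijection from (k,n)-partial noncrossing pairings to semistandard tableaux of shape 2^k with entries in [n]. -/
/-- A `(k,n)`-partial noncrossing pairing: a noncrossing matching `τ` (a set of pairs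
`(a,b)` with `a < b`, pairwise disjoint endpoints in `{1,…,n}`, no two pairs crossing)
of a subset of `{1,…,n}`, together with a set `T` of marked vertices disjoint from the
endpoints, with `|T| + |τ| = k`. -/
def IsPNP (k n : ℕ) (τ : Finset (ℕ × ℕ)) (T : Finset ℕ) : Prop :=
  (∀ p ∈ τ, p.1 < p.2 ∧ p.1 ∈ Finset.Icc 1 n ∧ p.2 ∈ Finset.Icc 1 n) ∧
  T ⊆ Finset.Icc 1 n ∧
  (∀ p ∈ τ, ∀ q ∈ τ, p ≠ q → p.1 ≠ q.1 ∧ p.1 ≠ q.2 ∧ p.2 ≠ q.1 ∧ p.2 ≠ q.2) ∧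
  (∀ p ∈ τ, p.1 ∉ T ∧ p.2 ∉ T) ∧
  (∀ p ∈ τ, ∀ q ∈ τ, ¬(p.1 < q.1 ∧ q.1 < p.2 ∧ p.2 < q.2)) ∧
  T.card + τ.card = k

/-- The map `θ` from partial noncrossing pairings to pairs of `k`-subsets:
`I₁ = T ∪ {smaller endpoints}`, `I₂ = T ∪ {larger endpoints}`. -/
def theta (τ : Finset (ℕ × ℕ)) (T : Finset ℕ) : Finset ℕ × Finset ℕ :=
  (T ∪ τ.image Prod.fst, T ∪ τ.image Prod.snd)

/-- `(I,J)` is a standard pair of `k`-subsets of `{1,…,n}`: the `r`-th smallest element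
of `I` is at most the `r`-th smallest element of `J` for all `r` (so `I` and `J` form
the two columns of a semistandard tableau of shape `2^k`). -/
def IsStandardPair (k n : ℕ) (I J : Finset ℕ) : Prop :=
  I.card = k ∧ J.card = k ∧ I ⊆ Finset.Icc 1 n ∧ J ⊆ Finset.Icc 1 n ∧
  ∀ r, r < k → (I.sort (· ≤ ·)).getD r 0 ≤ (J.sort (· ≤ ·)).getD r 0

/-- `τ` is the partial noncrossing matching `θ⁻¹(I,J)` associated to the pair `(I,J)`:
the marked vertices are `I ∩ J`, and `θ` sends `(τ, I ∩ J)` to `(I,J)`. -/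
def Matching (k n : ℕ) (I J : Finset ℕ) (τ : Finset (ℕ × ℕ)) : Prop :=
  IsPNP k n τ (I ∩ J) ∧ (I ∩ J) ∪ τ.image Prod.fst = I ∧ (I ∩ J) ∪ τ.image Prod.snd = J

open Finset

def cnt (S : Finset ℕ) (x : ℕ) : ℕ := (S.filter (· ≤ x)).card

lemma cnt_eq_countP (S : Finset ℕ) (x : ℕ) :
    cnt S x = (S.sort (· ≤ ·)).countP (fun a => decide (a ≤ x)) := by
  rw [(Finset.sort_perm_toList (s := S) (r := (· ≤ ·))).countP_eq (fun a => decide (a ≤ x))]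
  rw [List.countP_eq_length_filter]
  have : (S.filter (· ≤ x)).val = Multiset.filter (· ≤ x) S.val := rfl
  rw [cnt, Finset.card, this, ← Multiset.coe_toList S.val]
  rw [Multiset.filter_coe, Multiset.coe_card]
  simp [Finset.toList, Multiset.coe_toList]

lemma getD_le_iff (S : Finset ℕ) (x r : ℕ) (hr : r < S.card) :
    (S.sort (· ≤ ·)).getD r 0 ≤ x ↔ r < cnt S x := by
  set l := S.sort (· ≤ ·) with hl
  have hlen : l.length = S.card := Finset.length_sort _
  have hsort : l.Pairwise (· ≤ ·) := Finset.pairwise_sort _ _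
  have hrl : r < l.length := by omega
  have hmono : ∀ i j : Fin l.length, i ≤ j → l.get i ≤ l.get j :=
    fun i j h => hsort.rel_get_of_le h
  rw [cnt_eq_countP, ← hl]
  constructor
  · intro h
    have key : (l.take (r+1)).countP (fun a => decide (a ≤ x)) = (l.take (r+1)).length := by
      rw [List.countP_eq_length]
      intro a ha
      simp only [decide_eq_true_eq]
      obtain ⟨i, hi, rfl⟩ := List.mem_take_iff_getElem.mp ha
      have : l[i] ≤ l[r] := by
        have := hmono ⟨i, by omega⟩ ⟨r, hrl⟩ (by simp; omega)
        simpa using this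
      calc l[i] ≤ l[r] := this
        _ ≤ x := by rwa [List.getD_eq_getElem l 0 hrl] at h
    have := (List.countP_append : (l.take (r+1) ++ l.drop (r+1)).countP (fun a => decide (a ≤ x)) = (l.take (r+1)).countP (fun a => decide (a ≤ x)) + (l.drop (r+1)).countP (fun a => decide (a ≤ x)))
    rw [List.take_append_drop] at this
    rw [this, key]
    have : (l.take (r+1)).length = r+1 := by rw [List.length_take]; omega
    omega
  · intro h
    by_contra hc
    push_neg at hc
    rw [List.getD_eq_getElem l 0 hrl] at hc
    have hdrop : (l.drop r).countP (fun a => decide (a ≤ x)) = 0 := by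
      rw [List.countP_eq_zero]
      intro a ha
      simp only [decide_eq_true_eq, not_le]
      obtain ⟨i, hi, rfl⟩ := List.mem_drop_iff_getElem.mp ha
      have : l[r] ≤ l[r + i] := by
        have := hmono ⟨r, hrl⟩ ⟨r + i, by omega⟩ (by simp)
        simpa using this
      omega
    have htake : (l.take r).countP (fun a => decide (a ≤ x)) ≤ r := by
      calc _ ≤ (l.take r).length := List.countP_le_length
        _ ≤ r := by rw [List.length_take]; omega
    have := (List.countP_append : (l.take r ++ l.drop r).countP (fun a => decide (a ≤ x)) = (l.take r).countP (fun a => decide (a ≤ x)) + (l.drop r).countP (fun a => decide (a ≤ x)))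
    rw [List.take_append_drop] at this
    omega

lemma cnt_le_card (S : Finset ℕ) (x : ℕ) : cnt S x ≤ S.card :=
  Finset.card_le_card (Finset.filter_subset _ _)

/-- counts dominance implies entrywise dominance of sorted lists -/
lemma sorted_le_of_cnt {I J : Finset ℕ} (h : ∀ x, cnt J x ≤ cnt I x)
    {r : ℕ} (hrI : r < I.card) (hrJ : r < J.card) :
    (I.sort (· ≤ ·)).getD r 0 ≤ (J.sort (· ≤ ·)).getD r 0 := by
  set b := (J.sort (· ≤ ·)).getD r 0 with hb
  have h1 : r < cnt J b := (getD_le_iff J b r hrJ).mp le_rfl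
  exact (getD_le_iff I b r hrI).mpr (lt_of_lt_of_le h1 (h b))

/-- entrywise dominance implies counts dominance -/
lemma cnt_le_of_sorted {I J : Finset ℕ} (hc : I.card = J.card)
    (h : ∀ r, r < J.card → (I.sort (· ≤ ·)).getD r 0 ≤ (J.sort (· ≤ ·)).getD r 0)
    (x : ℕ) : cnt J x ≤ cnt I x := by
  set m := cnt J x with hm
  rcases Nat.eq_zero_or_pos m with h0 | h0
  · omega
  have hmc : m ≤ J.card := cnt_le_card J x
  have hr : m - 1 < J.card := by omega
  have h1 : (J.sort (· ≤ ·)).getD (m-1) 0 ≤ x := (getD_le_iff J x (m-1) hr).mpr (by omega)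
  have h2 : (I.sort (· ≤ ·)).getD (m-1) 0 ≤ x := le_trans (h (m-1) hr) h1
  have := (getD_le_iff I x (m-1) (by omega)).mp h2
  omega

lemma cnt_union_disjoint {A B : Finset ℕ} (h : Disjoint A B) (x : ℕ) :
    cnt (A ∪ B) x = cnt A x + cnt B x := by
  unfold cnt
  rw [Finset.filter_union, Finset.card_union_of_disjoint
    (Finset.disjoint_filter_filter h)]


def IsMatch (A B : Finset ℕ) (τ : Finset (ℕ × ℕ)) : Prop :=
  (∀ p ∈ τ, p.1 < p.2) ∧
  (∀ p ∈ τ, ∀ q ∈ τ, p ≠ q → p.1 ≠ q.1 ∧ p.1 ≠ q.2 ∧ p.2 ≠ q.1 ∧ p.2 ≠ q.2) ∧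
  (∀ p ∈ τ, ∀ q ∈ τ, ¬(p.1 < q.1 ∧ q.1 < p.2 ∧ p.2 < q.2)) ∧
  τ.image Prod.fst = A ∧ τ.image Prod.snd = B

lemma cnt_erase_of_min (B : Finset ℕ) (b : ℕ) (hb : b ∈ B) (hmin : ∀ c ∈ B, b ≤ c) (x : ℕ) :
    cnt (B.erase b) x = if b ≤ x then cnt B x - 1 else cnt B x := by
  unfold cnt
  rw [Finset.filter_erase]
  split
  · next h => rw [Finset.card_erase_of_mem (by simp [hb, h])]
  · next h =>
    rw [Finset.erase_eq_of_notMem]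
    simp only [mem_filter, not_and]
    exact fun _ => h

lemma cnt_erase_le (A : Finset ℕ) (a : ℕ) (ha : a ∈ A) (x : ℕ) (hx : a ≤ x) :
    cnt (A.erase a) x = cnt A x - 1 := by
  unfold cnt
  rw [Finset.filter_erase, Finset.card_erase_of_mem (by simp [ha, hx])]

lemma cnt_pos (B : Finset ℕ) (b : ℕ) (hb : b ∈ B) : 0 < cnt B b :=
  Finset.card_pos.mpr ⟨b, by simp [cnt, hb]⟩

lemma exists_match : ∀ (m : ℕ) (A B : Finset ℕ), B.card = m → A.card = B.card →
    Disjoint A B → (∀ x, cnt B x ≤ cnt A x) → ∃ τ, IsMatch A B τ := by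
  intro m
  induction m with
  | zero =>
    intro A B hB hAB _ _
    have : B = ∅ := Finset.card_eq_zero.mp hB
    have hA : A = ∅ := Finset.card_eq_zero.mp (by omega)
    exact ⟨∅, by simp [IsMatch, this, hA]⟩
  | succ m ih =>
    intro A B hB hAB hdisj hcnt
    have hBne : B.Nonempty := Finset.card_pos.mp (by omega)
    set b := B.min' hBne with hbdef
    have hbB : b ∈ B := B.min'_mem hBne
    have hbmin : ∀ c ∈ B, b ≤ c := fun c hc => B.min'_le c hc
    -- find a
    have hAfne : (A.filter (· < b)).Nonempty := by
      have h1 : 0 < cnt A b := lt_of_lt_of_le (cnt_pos B b hbB) (hcnt b)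
      obtain ⟨a, ha⟩ := Finset.card_pos.mp h1
      simp only [cnt, mem_filter] at ha
      have hne : a ≠ b := fun h => (Finset.disjoint_left.mp hdisj ha.1) (h ▸ hbB)
      exact ⟨a, Finset.mem_filter.mpr ⟨ha.1, lt_of_le_of_ne ha.2 hne⟩⟩
    set a := (A.filter (· < b)).max' hAfne with hadef
    have haA : a ∈ A := (Finset.mem_filter.mp ((A.filter (· < b)).max'_mem hAfne)).1
    have hab : a < b := (Finset.mem_filter.mp ((A.filter (· < b)).max'_mem hAfne)).2
    have hamax : ∀ c ∈ A, c < b → c ≤ a := fun c hc hcb =>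
      (A.filter (· < b)).le_max' c (by simp [hc, hcb])
    -- recurse
    have hcard' : (A.erase a).card = (B.erase b).card := by
      rw [Finset.card_erase_of_mem haA, Finset.card_erase_of_mem hbB, hAB]
    have hdisj' : Disjoint (A.erase a) (B.erase b) :=
      Finset.disjoint_of_subset_left (Finset.erase_subset _ _)
        (Finset.disjoint_of_subset_right (Finset.erase_subset _ _) hdisj)
    have hcnt' : ∀ x, cnt (B.erase b) x ≤ cnt (A.erase a) x := by
      intro x
      rw [cnt_erase_of_min B b hbB hbmin x]
      split
      · next h =>
        rw [cnt_erase_le A a haA x (by omega)]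
        exact Nat.sub_le_sub_right (hcnt x) 1
      · next h =>
        have : cnt B x = 0 := by
          rw [cnt, Finset.card_eq_zero, Finset.filter_eq_empty_iff]
          intro c hc
          have := hbmin c hc
          omega
        rw [this]
        exact Nat.zero_le _
    obtain ⟨τ', hτ'⟩ := ih (A.erase a) (B.erase b)
      (by rw [Finset.card_erase_of_mem hbB, hB]; rfl) hcard' hdisj' hcnt'
    obtain ⟨hlt', hdist', hnc', hfst', hsnd'⟩ := hτ'
    have hmemA' : ∀ p ∈ τ', p.1 ∈ A.erase a := fun p hp => hfst' ▸ Finset.mem_image_of_mem _ hp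
    have hmemB' : ∀ p ∈ τ', p.2 ∈ B.erase b := fun p hp => hsnd' ▸ Finset.mem_image_of_mem _ hp
    refine ⟨insert (a, b) τ', ?_, ?_, ?_, ?_, ?_⟩
    · intro p hp
      rcases Finset.mem_insert.mp hp with rfl | hp
      · exact hab
      · exact hlt' p hp
    · intro p hp q hq hne
      rcases Finset.mem_insert.mp hp with rfl | hp <;> rcases Finset.mem_insert.mp hq with rfl | hq
      · exact absurd rfl hne
      · have h1 := hmemA' q hq
        have h2 := hmemB' q hq
        refine ⟨fun h => (Finset.mem_erase.mp h1).1 h.symm, fun h => ?_, fun h => ?_, fun h => (Finset.mem_erase.mp h2).1 h.symm⟩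
        · exact Finset.disjoint_left.mp hdisj haA ((show a = q.2 from h) ▸ (Finset.mem_of_mem_erase h2))
        · exact Finset.disjoint_left.mp hdisj ((show b = q.1 from h) ▸ Finset.mem_of_mem_erase h1) hbB
      · have h1 := hmemA' p hp
        have h2 := hmemB' p hp
        refine ⟨fun h => (Finset.mem_erase.mp h1).1 h, fun h => ?_, fun h => ?_, fun h => (Finset.mem_erase.mp h2).1 h⟩
        · exact Finset.disjoint_left.mp hdisj ((show p.1 = b from h) ▸ Finset.mem_of_mem_erase h1) hbB
        · exact Finset.disjoint_left.mp hdisj haA ((show a = p.2 from h.symm) ▸ Finset.mem_of_mem_erase h2)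
      · exact hdist' p hp q hq hne
    · intro p hp q hq
      rcases Finset.mem_insert.mp hp with rfl | hp <;> rcases Finset.mem_insert.mp hq with rfl | hq
      · rintro ⟨h1, h2, h3⟩; omega
      · rintro ⟨h1, h2, h3⟩
        have hq1 : q.1 ∈ A := Finset.mem_of_mem_erase (hmemA' q hq)
        have := hamax q.1 hq1 h2
        omega
      · rintro ⟨h1, h2, h3⟩
        have hp2 : p.2 ∈ B := Finset.mem_of_mem_erase (hmemB' p hp)
        have := hbmin p.2 hp2
        omega
      · exact hnc' p hp q hq
    · rw [Finset.image_insert, hfst', Finset.insert_erase haA]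
    · rw [Finset.image_insert, hsnd', Finset.insert_erase hbB]

lemma match_image_erase {A B : Finset ℕ} {τ : Finset (ℕ × ℕ)} (h : IsMatch A B τ)
    {p : ℕ × ℕ} (hp : p ∈ τ) : IsMatch (A.erase p.1) (B.erase p.2) (τ.erase p) := by
  obtain ⟨hlt, hdist, hnc, hfst, hsnd⟩ := h
  refine ⟨fun q hq => hlt q (Finset.mem_of_mem_erase hq),
    fun q hq r hr => hdist q (Finset.mem_of_mem_erase hq) r (Finset.mem_of_mem_erase hr),
    fun q hq r hr => hnc q (Finset.mem_of_mem_erase hq) r (Finset.mem_of_mem_erase hr), ?_, ?_⟩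
  · ext c
    simp only [Finset.mem_image, Finset.mem_erase]
    constructor
    · rintro ⟨q, hq, rfl⟩
      exact ⟨(hdist q hq.2 p hp hq.1).1, hfst ▸ Finset.mem_image_of_mem _ hq.2⟩
    · rintro ⟨hc1, hc2⟩
      obtain ⟨q, hq, rfl⟩ := Finset.mem_image.mp (hfst ▸ hc2 : c ∈ τ.image Prod.fst)
      exact ⟨q, ⟨fun h => hc1 (by rw [h]), hq⟩, rfl⟩
  · ext c
    simp only [Finset.mem_image, Finset.mem_erase]
    constructor
    · rintro ⟨q, hq, rfl⟩
      exact ⟨(hdist q hq.2 p hp hq.1).2.2.2, hsnd ▸ Finset.mem_image_of_mem _ hq.2⟩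
    · rintro ⟨hc1, hc2⟩
      obtain ⟨q, hq, rfl⟩ := Finset.mem_image.mp (hsnd ▸ hc2 : c ∈ τ.image Prod.snd)
      exact ⟨q, ⟨fun h => hc1 (by rw [h]), hq⟩, rfl⟩

lemma match_max_below {A B : Finset ℕ} {τ : Finset (ℕ × ℕ)} (h : IsMatch A B τ)
    {p : ℕ × ℕ} (hp : p ∈ τ) (hmin : ∀ d ∈ B, p.2 ≤ d) :
    ∀ c ∈ A, c < p.2 → c ≤ p.1 := by
  obtain ⟨hlt, hdist, hnc, hfst, hsnd⟩ := h
  intro c hc hcb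
  by_contra hgt
  push_neg at hgt
  obtain ⟨q, hq, rfl⟩ := Finset.mem_image.mp (hfst ▸ hc : c ∈ τ.image Prod.fst)
  have hne : q ≠ p := fun h => absurd (h ▸ hgt) (lt_irrefl _)
  have hq2 : q.2 ∈ B := hsnd ▸ Finset.mem_image_of_mem _ hq
  have h1 : p.2 ≤ q.2 := hmin _ hq2
  have h2 : q.2 ≠ p.2 := (hdist q hq p hp hne).2.2.2
  exact hnc p hp q hq ⟨hgt, hcb, lt_of_le_of_ne h1 (Ne.symm h2)⟩

lemma match_unique : ∀ (m : ℕ) (A B : Finset ℕ) (τ σ : Finset (ℕ × ℕ)), τ.card = m →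
    IsMatch A B τ → IsMatch A B σ → τ = σ := by
  intro m
  induction m with
  | zero =>
    intro A B τ σ hm hτ hσ
    have hτe : τ = ∅ := Finset.card_eq_zero.mp hm
    have : A = ∅ := by rw [← hτ.2.2.2.1, hτe, Finset.image_empty]
    have hσe : σ = ∅ := Finset.image_eq_empty.mp (this ▸ hσ.2.2.2.1)
    rw [hτe, hσe]
  | succ m ih =>
    intro A B τ σ hm hτ hσ
    have hτne : τ.Nonempty := Finset.card_pos.mp (by omega)
    have hBne : B.Nonempty := by
      obtain ⟨p, hp⟩ := hτne
      exact ⟨p.2, hτ.2.2.2.2 ▸ Finset.mem_image_of_mem _ hp⟩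
    set b := B.min' hBne with hbdef
    have hbB : b ∈ B := B.min'_mem hBne
    have hbmin : ∀ c ∈ B, b ≤ c := fun c hc => B.min'_le c hc
    obtain ⟨p, hp, hp2⟩ := Finset.mem_image.mp (hτ.2.2.2.2 ▸ hbB : b ∈ τ.image Prod.snd)
    obtain ⟨q, hq, hq2⟩ := Finset.mem_image.mp (hσ.2.2.2.2 ▸ hbB : b ∈ σ.image Prod.snd)
    have hpmin : ∀ d ∈ B, p.2 ≤ d := fun d hd => hp2 ▸ hbmin d hd
    have hqmin : ∀ d ∈ B, q.2 ≤ d := fun d hd => hq2 ▸ hbmin d hd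
    have hp1A : p.1 ∈ A := hτ.2.2.2.1 ▸ Finset.mem_image_of_mem _ hp
    have hq1A : q.1 ∈ A := hσ.2.2.2.1 ▸ Finset.mem_image_of_mem _ hq
    have h1 : q.1 ≤ p.1 := match_max_below hτ hp hpmin q.1 hq1A (by
      have := hσ.1 q hq; omega)
    have h2 : p.1 ≤ q.1 := match_max_below hσ hq hqmin p.1 hp1A (by
      have := hτ.1 p hp; omega)
    have hpq : p = q := Prod.ext (le_antisymm h2 h1) (hp2.trans hq2.symm)
    have hτ' := match_image_erase hτ hp
    have hσ' := match_image_erase hσ hq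
    rw [← hpq] at hσ'
    have : τ.erase p = σ.erase p :=
      ih (A.erase p.1) (B.erase p.2) _ _ (by rw [Finset.card_erase_of_mem hp, hm]; rfl) hτ' hσ'
    have hpσ : p ∈ σ := hpq ▸ hq
    rw [← Finset.insert_erase hp, this, Finset.insert_erase hpσ]

lemma pnp_forward (k n : ℕ) (τ : Finset (ℕ × ℕ)) (T : Finset ℕ) (h : IsPNP k n τ T) :
    IsStandardPair k n (theta τ T).1 (theta τ T).2 ∧ (theta τ T).1 ∩ (theta τ T).2 = T := by
  obtain ⟨hmem, hT, hdist, hTd, hnc, hcard⟩ := h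
  set F := τ.image Prod.fst with hF
  set S := τ.image Prod.snd with hS
  have hfinj : Set.InjOn Prod.fst (↑τ : Set (ℕ × ℕ)) := by
    intro p hp q hq hpq
    by_contra hne
    exact (hdist p hp q hq hne).1 hpq
  have hsinj : Set.InjOn Prod.snd (↑τ : Set (ℕ × ℕ)) := by
    intro p hp q hq hpq
    by_contra hne
    exact (hdist p hp q hq hne).2.2.2 hpq
  have hFcard : F.card = τ.card := Finset.card_image_of_injOn hfinj
  have hScard : S.card = τ.card := Finset.card_image_of_injOn hsinj
  have hTF : Disjoint T F := Finset.disjoint_left.mpr (fun a haT haF => by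
    obtain ⟨p, hp, rfl⟩ := Finset.mem_image.mp haF
    exact (hTd p hp).1 haT)
  have hTS : Disjoint T S := Finset.disjoint_left.mpr (fun a haT haS => by
    obtain ⟨p, hp, rfl⟩ := Finset.mem_image.mp haS
    exact (hTd p hp).2 haT)
  have hFS : Disjoint F S := Finset.disjoint_left.mpr (fun a haF haS => by
    obtain ⟨p, hp, rfl⟩ := Finset.mem_image.mp haF
    obtain ⟨q, hq, he⟩ := Finset.mem_image.mp haS
    by_cases hpq : p = q
    · subst hpq
      have := (hmem p hp).1
      omega
    · exact (hdist p hp q hq hpq).2.1 he.symm)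
  have hI1card : (T ∪ F).card = k := by
    rw [Finset.card_union_of_disjoint hTF, hFcard, hcard]
  have hI2card : (T ∪ S).card = k := by
    rw [Finset.card_union_of_disjoint hTS, hScard, hcard]
  have hI1sub : T ∪ F ⊆ Finset.Icc 1 n := by
    apply Finset.union_subset hT
    intro a ha
    obtain ⟨p, hp, rfl⟩ := Finset.mem_image.mp ha
    exact (hmem p hp).2.1
  have hI2sub : T ∪ S ⊆ Finset.Icc 1 n := by
    apply Finset.union_subset hT
    intro a ha
    obtain ⟨p, hp, rfl⟩ := Finset.mem_image.mp ha
    exact (hmem p hp).2.2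
  have hcntFS : ∀ x, cnt S x ≤ cnt F x := by
    intro x
    have e1 : S.filter (· ≤ x) = (τ.filter (fun p => p.2 ≤ x)).image Prod.snd := by
      ext a
      simp only [Finset.mem_filter, Finset.mem_image]
      constructor
      · rintro ⟨ha, hax⟩
        obtain ⟨p, hp, rfl⟩ := Finset.mem_image.mp ha
        exact ⟨p, ⟨hp, hax⟩, rfl⟩
      · rintro ⟨p, ⟨hp1, hp2⟩, rfl⟩
        exact ⟨Finset.mem_image_of_mem _ hp1, hp2⟩
    have e2 : ((τ.filter (fun p => p.2 ≤ x)).image Prod.snd).card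
        = (τ.filter (fun p => p.2 ≤ x)).card :=
      Finset.card_image_of_injOn (hsinj.mono (Finset.coe_subset.mpr (Finset.filter_subset _ _)))
    have e3 : (τ.filter (fun p => p.2 ≤ x)).image Prod.fst ⊆ F.filter (· ≤ x) := by
      intro a ha
      obtain ⟨p, hp, rfl⟩ := Finset.mem_image.mp ha
      obtain ⟨hp1, hp2⟩ := Finset.mem_filter.mp hp
      refine Finset.mem_filter.mpr ⟨Finset.mem_image_of_mem _ hp1, ?_⟩
      have := (hmem p hp1).1
      omega
    have e4 : ((τ.filter (fun p => p.2 ≤ x)).image Prod.fst).card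
        = (τ.filter (fun p => p.2 ≤ x)).card :=
      Finset.card_image_of_injOn (hfinj.mono (Finset.coe_subset.mpr (Finset.filter_subset _ _)))
    calc cnt S x = (τ.filter (fun p => p.2 ≤ x)).card := by rw [cnt, e1, e2]
      _ = ((τ.filter (fun p => p.2 ≤ x)).image Prod.fst).card := e4.symm
      _ ≤ (F.filter (· ≤ x)).card := Finset.card_le_card e3
      _ = cnt F x := rfl
  have hcnts : ∀ x, cnt (T ∪ S) x ≤ cnt (T ∪ F) x := by
    intro x
    rw [cnt_union_disjoint hTF, cnt_union_disjoint hTS]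
    exact Nat.add_le_add_left (hcntFS x) _
  constructor
  · refine ⟨hI1card, hI2card, hI1sub, hI2sub, fun r hr => ?_⟩
    exact sorted_le_of_cnt hcnts (by rw [hI1card]; exact hr) (by rw [hI2card]; exact hr)
  · show (T ∪ F) ∩ (T ∪ S) = T
    ext a
    simp only [Finset.mem_inter, Finset.mem_union]
    constructor
    · rintro ⟨h1 | h1, h2 | h2⟩
      · exact h1
      · exact h1
      · exact h2
      · exact absurd h2 (Finset.disjoint_left.mp hFS h1)
    · intro h
      exact ⟨Or.inl h, Or.inl h⟩

lemma pnp_isMatch {k n : ℕ} {τ : Finset (ℕ × ℕ)} {T : Finset ℕ} (h : IsPNP k n τ T) :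
    IsMatch (τ.image Prod.fst) (τ.image Prod.snd) τ :=
  ⟨fun p hp => (h.1 p hp).1, h.2.2.1, h.2.2.2.2.1, rfl, rfl⟩


/-- `θ` maps each `(k,n)`-partial noncrossing pairing `(τ,T)` to a standard pair
`(I₁,I₂)` with `I₁ ∩ I₂ = T`, and is a bijection from `(k,n)`-partial noncrossing
pairings to standard pairs (i.e. to semistandard tableaux of shape `2^k` with entries
in `{1,…,n}`, recorded by their two columns). -/
theorem stmt_4 (k n : ℕ) :
    (∀ τ T, IsPNP k n τ T →
      IsStandardPair k n (theta τ T).1 (theta τ T).2 ∧ (theta τ T).1 ∩ (theta τ T).2 = T) ∧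
    Set.BijOn (fun p : Finset (ℕ × ℕ) × Finset ℕ => theta p.1 p.2)
      {p | IsPNP k n p.1 p.2} {q | IsStandardPair k n q.1 q.2} := by
  refine ⟨fun τ T h => pnp_forward k n τ T h, ?_, ?_, ?_⟩
  · -- MapsTo
    rintro ⟨τ, T⟩ h
    exact ((pnp_forward k n τ T h).1 : IsStandardPair k n _ _)
  · -- InjOn
    rintro ⟨τ, T⟩ hτ ⟨σ, U⟩ hσ he
    simp only [Set.mem_setOf_eq] at hτ hσ
    simp only at he
    have h1 := pnp_forward k n τ T hτ
    have h2 := pnp_forward k n σ U hσ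
    have hTU : T = U := by rw [← h1.2, ← h2.2, he]
    subst hTU
    have he1 : T ∪ τ.image Prod.fst = T ∪ σ.image Prod.fst := congrArg Prod.fst he
    have he2 : T ∪ τ.image Prod.snd = T ∪ σ.image Prod.snd := congrArg Prod.snd he
    have hTFτ : Disjoint T (τ.image Prod.fst) := Finset.disjoint_left.mpr (fun a haT haF => by
      obtain ⟨p, hp, rfl⟩ := Finset.mem_image.mp haF
      exact (hτ.2.2.2.1 p hp).1 haT)
    have hTFσ : Disjoint T (σ.image Prod.fst) := Finset.disjoint_left.mpr (fun a haT haF => by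
      obtain ⟨p, hp, rfl⟩ := Finset.mem_image.mp haF
      exact (hσ.2.2.2.1 p hp).1 haT)
    have hTSτ : Disjoint T (τ.image Prod.snd) := Finset.disjoint_left.mpr (fun a haT haF => by
      obtain ⟨p, hp, rfl⟩ := Finset.mem_image.mp haF
      exact (hτ.2.2.2.1 p hp).2 haT)
    have hTSσ : Disjoint T (σ.image Prod.snd) := Finset.disjoint_left.mpr (fun a haT haF => by
      obtain ⟨p, hp, rfl⟩ := Finset.mem_image.mp haF
      exact (hσ.2.2.2.1 p hp).2 haT)
    have hF : τ.image Prod.fst = σ.image Prod.fst := by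
      rw [← Finset.union_sdiff_cancel_left hTFτ, ← Finset.union_sdiff_cancel_left hTFσ, he1]
    have hS : τ.image Prod.snd = σ.image Prod.snd := by
      rw [← Finset.union_sdiff_cancel_left hTSτ, ← Finset.union_sdiff_cancel_left hTSσ, he2]
    have hmτ := pnp_isMatch hτ
    have hmσ := pnp_isMatch hσ
    rw [← hF, ← hS] at hmσ
    have := match_unique τ.card _ _ τ σ rfl hmτ hmσ
    simp [this]
  · -- SurjOn
    rintro ⟨I, J⟩ hstd
    simp only [Set.mem_setOf_eq] at hstd
    obtain ⟨hIc, hJc, hIs, hJs, hsorted⟩ := hstd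
    set T := I ∩ J with hTdef
    set A := I \ T with hAdef
    set B := J \ T with hBdef
    have hTI : T ⊆ I := Finset.inter_subset_left
    have hTJ : T ⊆ J := Finset.inter_subset_right
    have hIA : T ∪ A = I := Finset.union_sdiff_of_subset hTI
    have hJB : T ∪ B = J := Finset.union_sdiff_of_subset hTJ
    have hTA : Disjoint T A := Finset.disjoint_sdiff
    have hTB : Disjoint T B := Finset.disjoint_sdiff
    have hAB : Disjoint A B := Finset.disjoint_left.mpr (fun a ha hb => by
      rw [hAdef, Finset.mem_sdiff] at ha
      rw [hBdef, Finset.mem_sdiff] at hb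
      exact ha.2 (Finset.mem_inter.mpr ⟨ha.1, hb.1⟩))
    have hAcard : A.card = k - T.card := by
      rw [hAdef, Finset.card_sdiff_of_subset hTI, hIc]
    have hBcard : B.card = k - T.card := by
      rw [hBdef, Finset.card_sdiff_of_subset hTJ, hJc]
    have hcnts : ∀ x, cnt B x ≤ cnt A x := by
      intro x
      have hJI : cnt J x ≤ cnt I x :=
        cnt_le_of_sorted (hIc.trans hJc.symm) (fun r hr => hsorted r (hJc ▸ hr)) x
      have e1 : cnt I x = cnt T x + cnt A x := by rw [← hIA, cnt_union_disjoint hTA]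
      have e2 : cnt J x = cnt T x + cnt B x := by rw [← hJB, cnt_union_disjoint hTB]
      omega
    obtain ⟨τ, hm⟩ := exists_match B.card A B rfl (by omega) hAB hcnts
    obtain ⟨hlt, hdist, hnc, hfst, hsnd⟩ := hm
    have hτcard : τ.card = A.card := by
      rw [← hfst]
      exact (Finset.card_image_of_injOn (fun p hp q hq hpq => by
        by_contra hne
        exact (hdist p hp q hq hne).1 hpq)).symm
    have hTle : T.card ≤ k := by rw [← hIc]; exact Finset.card_le_card hTI
    refine ⟨(τ, T), ?_, ?_⟩
    · show IsPNP k n τ T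
      refine ⟨?_, ?_, hdist, ?_, hnc, ?_⟩
      · intro p hp
        have hp1 : p.1 ∈ A := hfst ▸ Finset.mem_image_of_mem _ hp
        have hp2 : p.2 ∈ B := hsnd ▸ Finset.mem_image_of_mem _ hp
        exact ⟨hlt p hp, hIs (Finset.sdiff_subset hp1), hJs (Finset.sdiff_subset hp2)⟩
      · exact hTI.trans hIs
      · intro p hp
        have hp1 : p.1 ∈ A := hfst ▸ Finset.mem_image_of_mem _ hp
        have hp2 : p.2 ∈ B := hsnd ▸ Finset.mem_image_of_mem _ hp
        exact ⟨(Finset.mem_sdiff.mp hp1).2, (Finset.mem_sdiff.mp hp2).2⟩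
      · omega
    · show theta τ T = (I, J)
      rw [theta, hfst, hsnd, hIA, hJB]
end

section
/- For any k-subsets I, J of [n], a legal path from (I,J) to (K,L) exists only if (I,J) ≤ (K,L) in the partial order where (I,J) ≤ (C,D) means the r-th smallest element of I is at most the r-th smallest element of C for all r; moreover each single swap step strictly increases the pair in this order. -/
/-- The elements of a `k`-subset listed in increasing order, as a tuple. -/
def sortedTuple (k : ℕ) (I : Finset ℕ) : Fin k → ℕ := fun r =>
  (I.sort (· ≤ ·)).getD (r : ℕ) 0

/-- Componentwise (Gale) order on `k`-subsets: the `r`-th smallest element of `I` is at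
most the `r`-th smallest element of `C` for all `r < k`. -/
def FLe (k : ℕ) (I C : Finset ℕ) : Prop :=
  ∀ r, r < k → (I.sort (· ≤ ·)).getD r 0 ≤ (C.sort (· ≤ ·)).getD r 0

/-- One swap step `(𝐈,J) →_a (𝐈',J')`: for a strand `(i_a, j)` of the matching
`τ(𝐈,J)` (with `i_a` the `a`-th entry of the tuple `𝐈`), replace `i_a` by `j` in the
tuple and `j` by `i_a` in `J`, provided the resulting pair is standard. -/
def Step (k n : ℕ) (a : Fin k) (p q : (Fin k → ℕ) × Finset ℕ) : Prop :=
  ∃ τ j, Matching k n (Finset.univ.image p.1) p.2 τ ∧ (p.1 a, j) ∈ τ ∧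
    q.1 = Function.update p.1 a j ∧ q.2 = insert (p.1 a) (p.2.erase j) ∧
    IsStandardPair k n (Finset.univ.image q.1) q.2

/-- A legal path: a sequence of swap steps with weakly decreasing indices
`a_1 ≥ a_2 ≥ ⋯ ≥ a_r`, recorded by its list of states and its list of indices. -/
def IsLegalPath (k n : ℕ) (states : List ((Fin k → ℕ) × Finset ℕ))
    (idxs : List (Fin k)) : Prop :=
  states.length = idxs.length + 1 ∧
  (∀ t a p q, idxs[t]? = some a → states[t]? = some p →
    states[t + 1]? = some q → Step k n a p q) ∧
  idxs.Chain' (fun a b => b ≤ a)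

section Aux

lemma filter_card_ge' (A : Finset ℕ) (r : ℕ) (hr : r < A.card) :
    r + 1 ≤ (A.filter (· ≤ (A.sort (· ≤ ·)).getD r 0)).card := by
  set l := A.sort (· ≤ ·) with hl
  have hlen : l.length = A.card := Finset.length_sort _
  have hrl : r < l.length := hlen ▸ hr
  have hnd : l.Nodup := A.sort_nodup _
  have hsub : (l.take (r+1)).toFinset ⊆ A.filter (· ≤ l.getD r 0) := by
    intro b hb
    rw [List.mem_toFinset] at hb
    obtain ⟨i, hi, hib⟩ := List.mem_iff_getElem.mp hb
    have htl : (l.take (r+1)).length = min (r+1) l.length := List.length_take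
    have hilen : i < l.length := by omega
    have hir : i ≤ r := by omega
    rw [List.getElem_take] at hib
    rw [Finset.mem_filter]
    constructor
    · rw [← Finset.mem_sort (· ≤ ·), ← hl, ← hib]; exact List.getElem_mem _
    · rw [List.getD_eq_getElem l 0 hrl, ← hib]
      rcases eq_or_lt_of_le hir with h | h
      · subst h; exact le_refl _
      · exact le_of_lt ((Finset.sortedLT_sort A).strictMono_get (a := ⟨i, hilen⟩) (b := ⟨r, hrl⟩) h)
  have hnd' : (l.take (r+1)).Nodup := hnd.sublist (List.take_sublist _ _)
  calc r + 1 = (l.take (r+1)).toFinset.card := by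
        rw [List.toFinset_card_of_nodup hnd', List.length_take]; omega
    _ ≤ _ := Finset.card_le_card hsub

lemma filter_card_le' (A : Finset ℕ) (r m : ℕ) (hr : r < A.card)
    (hm : m < (A.sort (· ≤ ·)).getD r 0) :
    (A.filter (· ≤ m)).card ≤ r := by
  set l := A.sort (· ≤ ·) with hl
  have hlen : l.length = A.card := Finset.length_sort _
  have hrl : r < l.length := hlen ▸ hr
  have hsub : A.filter (· ≤ m) ⊆ (l.take r).toFinset := by
    intro b hb
    rw [Finset.mem_filter] at hb
    obtain ⟨hbA, hbm⟩ := hb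
    have hbl : b ∈ l := (Finset.mem_sort _).mpr hbA
    obtain ⟨i, hi, hib⟩ := List.mem_iff_getElem.mp hbl
    have hir : i < r := by
      by_contra h
      push_neg at h
      have : l.getD r 0 ≤ l[i] := by
        rw [List.getD_eq_getElem l 0 hrl]
        rcases eq_or_lt_of_le h with h' | h'
        · subst h'; exact le_refl _
        · exact le_of_lt ((Finset.sortedLT_sort A).strictMono_get (a := ⟨r, hrl⟩) (b := ⟨i, hi⟩) h')
      omega
    rw [List.mem_toFinset, List.mem_iff_getElem]
    exact ⟨i, by simp [List.length_take]; omega, by rw [List.getElem_take]; exact hib⟩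
  calc (A.filter (· ≤ m)).card ≤ (l.take r).toFinset.card := Finset.card_le_card hsub
    _ ≤ (l.take r).length := (l.take r).toFinset_card_le
    _ ≤ r := by simp [List.length_take]

lemma fle_of_counts' (k : ℕ) (A B : Finset ℕ) (hA : A.card = k) (hB : B.card = k)
    (h : ∀ m, (B.filter (· ≤ m)).card ≤ (A.filter (· ≤ m)).card) : FLe k A B := by
  intro r hr
  by_contra hcon
  push_neg at hcon
  have h1 := filter_card_ge' B r (hB ▸ hr)
  have h2 := filter_card_le' A r ((B.sort (· ≤ ·)).getD r 0) (hA ▸ hr) hcon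
  have := h ((B.sort (· ≤ ·)).getD r 0)
  omega

lemma counts_swap' (A : Finset ℕ) (x j : ℕ) (hx : x ∈ A) (hj : j ∉ A) (hxj : x < j) (m : ℕ) :
    ((insert j (A.erase x)).filter (· ≤ m)).card ≤ (A.filter (· ≤ m)).card := by
  classical
  rw [Finset.filter_insert, Finset.filter_erase]
  by_cases hjm : j ≤ m
  · simp only [hjm, if_true]
    have hxf : x ∈ A.filter (· ≤ m) := Finset.mem_filter.mpr ⟨hx, by omega⟩
    have hjf : j ∉ (A.filter (· ≤ m)).erase x := fun h =>
      hj (Finset.mem_filter.mp (Finset.mem_of_mem_erase h)).1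
    rw [Finset.card_insert_of_notMem hjf, Finset.card_erase_of_mem hxf]
    have : 1 ≤ (A.filter (· ≤ m)).card := Finset.card_pos.mpr ⟨x, hxf⟩
    omega
  · simp only [hjm, if_false]
    exact Finset.card_le_card (Finset.erase_subset _ _)

lemma image_update_univ' {k : ℕ} (f : Fin k → ℕ) (hf : Function.Injective f) (a : Fin k) (j : ℕ) :
    Finset.univ.image (Function.update f a j) = insert j ((Finset.univ.image f).erase (f a)) := by
  ext y
  simp only [Finset.mem_image, Finset.mem_univ, true_and, Finset.mem_insert, Finset.mem_erase]
  constructor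
  · rintro ⟨b, hb⟩
    by_cases hba : b = a
    · subst hba; rw [Function.update_self] at hb; exact Or.inl hb.symm
    · rw [Function.update_of_ne hba] at hb
      exact Or.inr ⟨fun hy => hba (hf (hb.trans hy)), b, hb⟩
  · rintro (rfl | ⟨hy, b, hb⟩)
    · exact ⟨a, Function.update_self _ _ _⟩
    · have hba : b ≠ a := fun h => hy (by rw [← h]; exact hb.symm)
      exact ⟨b, by rw [Function.update_of_ne hba]; exact hb⟩

lemma step_fle {k n : ℕ} {a : Fin k} {p q : (Fin k → ℕ) × Finset ℕ} (h : Step k n a p q) :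
    FLe k (Finset.univ.image p.1) (Finset.univ.image q.1) ∧
      Finset.univ.image p.1 ≠ Finset.univ.image q.1 := by
  classical
  obtain ⟨τ, j, ⟨⟨h1, h2, h3, h4, h5, h6⟩, hI, hJ⟩, hstr, hq1, hq2, hstd⟩ := h
  set I := Finset.univ.image p.1 with hIdef
  set T := I ∩ p.2 with hT
  have hxj : p.1 a < j := (h1 _ hstr).1
  have hjT : j ∉ T := (h4 _ hstr).2
  have hjfst : j ∉ τ.image Prod.fst := by
    rw [Finset.mem_image]
    rintro ⟨s, hs, hsj⟩
    by_cases hss : s = (p.1 a, j)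
    · subst hss; simp at hsj; omega
    · exact ((h3 _ hs _ hstr hss).2.1 (by simp [hsj]))
  have hjI : j ∉ I := by
    rw [← hI, Finset.mem_union]
    rintro (h | h)
    · exact hjT h
    · exact hjfst h
  have hinjOn : Set.InjOn Prod.fst (τ : Set (ℕ × ℕ)) := by
    intro s hs t ht hst
    by_contra hne
    exact (h3 s hs t ht hne).1 hst
  have hcf : (τ.image Prod.fst).card = τ.card := Finset.card_image_of_injOn hinjOn
  have hdisj : Disjoint T (τ.image Prod.fst) := by
    rw [Finset.disjoint_right]
    intro b hb
    rw [Finset.mem_image] at hb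
    obtain ⟨s, hs, hsb⟩ := hb
    exact fun hbT => (h4 _ hs).1 (hsb ▸ hbT)
  have hcard : I.card = k := by
    rw [← hI, Finset.card_union_of_disjoint hdisj, hcf, h6]
  have hinj : Function.Injective p.1 := by
    have h' : Set.InjOn p.1 ↑(Finset.univ : Finset (Fin k)) :=
      Finset.injOn_of_card_image_eq (by rw [← hIdef, hcard, Finset.card_univ, Fintype.card_fin])
    intro x y hxy
    exact h' (Finset.mem_coe.mpr (Finset.mem_univ _)) (Finset.mem_coe.mpr (Finset.mem_univ _)) hxy
  have himg : Finset.univ.image q.1 = insert j (I.erase (p.1 a)) := by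
    rw [hq1]; exact image_update_univ' p.1 hinj a j
  have hxI : p.1 a ∈ I := Finset.mem_image_of_mem _ (Finset.mem_univ _)
  have hqcard : (Finset.univ.image q.1).card = k := hstd.1
  constructor
  · refine fle_of_counts' k I (Finset.univ.image q.1) hcard hqcard ?_
    intro m
    rw [himg]
    exact counts_swap' I (p.1 a) j hxI hjI hxj m
  · intro hEq
    apply hjI
    rw [hEq, himg]
    exact Finset.mem_insert_self _ _

lemma fle_trans {k : ℕ} {A B C : Finset ℕ} (h1 : FLe k A B) (h2 : FLe k B C) : FLe k A C :=
  fun r hr => (h1 r hr).trans (h2 r hr)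

lemma path_fle (k n : ℕ) : ∀ (idxs : List (Fin k)) (states : List ((Fin k → ℕ) × Finset ℕ)),
    IsLegalPath k n states idxs → ∀ p q, states.head? = some p → states.getLast? = some q →
    FLe k (Finset.univ.image p.1) (Finset.univ.image q.1) := by
  intro idxs
  induction idxs with
  | nil =>
    intro states hpath p q hp hq
    obtain ⟨hlen, _, _⟩ := hpath
    match states, hlen with
    | [s], _ =>
      simp only [List.head?] at hp
      simp only [List.getLast?] at hq
      rw [Option.some_inj] at hp hq
      subst hp
      cases hq
      exact fun r hr => le_refl _
  | cons a as ih =>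
    intro states hpath p q hp hq
    obtain ⟨hlen, hstep, hchain⟩ := hpath
    match states, hlen with
    | s₀ :: s₁ :: rest, hlen =>
      simp only [List.head?, Option.some_inj] at hp
      subst hp
      have hstep0 : Step k n a s₀ s₁ := hstep 0 a s₀ s₁ rfl rfl rfl
      have hpath' : IsLegalPath k n (s₁ :: rest) as := by
        refine ⟨by simpa using hlen, ?_, hchain.tail⟩
        intro t b u v hb hu hv
        exact hstep (t+1) b u v hb hu hv
      have hq' : (s₁ :: rest).getLast? = some q := by
        rw [← hq, List.getLast?_cons_cons]
      exact fle_trans (step_fle hstep0).1 (ih (s₁ :: rest) hpath' s₁ q rfl hq')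

lemma image_sortedTuple' (k : ℕ) (I : Finset ℕ) (h : I.card = k) :
    Finset.univ.image (sortedTuple k I) = I := by
  set l := I.sort (· ≤ ·) with hl
  have hlen : l.length = k := by rw [hl, Finset.length_sort, h]
  ext y
  simp only [Finset.mem_image, Finset.mem_univ, true_and]
  constructor
  · rintro ⟨r, hr⟩
    have hrk : (r : ℕ) < l.length := by rw [hlen]; exact r.2
    rw [← Finset.mem_sort (· ≤ ·), ← hl, ← hr]
    unfold sortedTuple
    rw [← hl, List.getD_eq_getElem l 0 hrk]
    exact List.getElem_mem _
  · intro hy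
    have hyl : y ∈ l := by rw [hl]; exact (Finset.mem_sort _).mpr hy
    obtain ⟨i, hi, hiy⟩ := List.mem_iff_getElem.mp hyl
    refine ⟨⟨i, by omega⟩, ?_⟩
    unfold sortedTuple
    rw [← hl, List.getD_eq_getElem l 0 hi]
    exact hiy

end Aux

/-- Each single swap step strictly increases the pair in the componentwise order on
first components, and consequently a legal path from `(I,J)` to `(K,L)` exists only if
`(I,J) ≤ (K,L)` in that order. -/


theorem stmt_7 (k n : ℕ) :
    (∀ (a : Fin k) (p q : (Fin k → ℕ) × Finset ℕ), Step k n a p q →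
      FLe k (Finset.univ.image p.1) (Finset.univ.image q.1) ∧
        Finset.univ.image p.1 ≠ Finset.univ.image q.1) ∧
    (∀ (I J K L : Finset ℕ) (states : List ((Fin k → ℕ) × Finset ℕ))
        (idxs : List (Fin k)), I.card = k →
      IsLegalPath k n states idxs →
      states.head? = some (sortedTuple k I, J) →
      (∃ q, states.getLast? = some q ∧ Finset.univ.image q.1 = K ∧ q.2 = L) →
      FLe k I K) := by
  constructor
  · intro a p q h
    exact step_fle h
  · rintro I J K L states idxs hIcard hpath hhead ⟨q, hlast, hqK, -⟩
    have := path_fle k n idxs states hpath (sortedTuple k I, J) q hhead hlast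
    rwa [image_sortedTuple' k I hIcard, hqK] at this
end

section
/- If (i_a, j) is a strand of the partial noncrossing matching τ(𝐈,J) and swapping i_a with j yields a standard pair, then there exists a unique strand (i_b, j') of τ(𝐈,J) such that (i_a,j) is nested immediately under (i_b,j'); furthermore, the new matching τ(𝐈',J') is obtained from τ(𝐈,J) by replacing the strands (i_a,j) and (i_b,j') by (i_b,i_a) and (j,j'). -/
/-- Strand `s` is nested under strand `t` (strands are pairs `(i,j)` with `i < j`):
`t.1 < s.1 < s.2 < t.2`. -/
def Nested (s t : ℕ × ℕ) : Prop := t.1 < s.1 ∧ s.2 < t.2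

/-- `s` is nested immediately under `t` in the matching `τ`: `s` is nested under `t`,
`t ∈ τ`, and no strand of `τ` lies strictly between them. -/
def NestedImmediatelyUnder (τ : Finset (ℕ × ℕ)) (s t : ℕ × ℕ) : Prop :=
  t ∈ τ ∧ Nested s t ∧ ¬∃ u ∈ τ, Nested s u ∧ Nested u t


lemma filter_card_eq_countP (S : Finset ℕ) (p : ℕ → Prop) [DecidablePred p] :
    (S.filter p).card = (S.sort (· ≤ ·)).countP (fun x => decide (p x)) := by
  have h : ((S.sort (· ≤ ·) : List ℕ) : Multiset ℕ) = S.val := Finset.sort_eq _ _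
  rw [Finset.card, Finset.filter_val, ← Multiset.countP_eq_card_filter, ← h,
    Multiset.coe_countP]

lemma sort_getD_le_iff (S : Finset ℕ) (r x : ℕ) (hr : r < S.card) :
    (S.sort (· ≤ ·)).getD r 0 ≤ x ↔ r < (S.filter (· ≤ x)).card := by
  set l := S.sort (· ≤ ·) with hl
  have hlen : l.length = S.card := Finset.length_sort _
  have hr' : r < l.length := by omega
  have hsorted : l.Pairwise (· ≤ ·) := Finset.pairwise_sort (r := (· ≤ ·)) (s := S)
  have hpw := List.pairwise_iff_getElem.mp hsorted
  have hmono : ∀ (m m' : ℕ) (hmm : m ≤ m') (hm' : m' < l.length), l[m]'(by omega) ≤ l[m'] := by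
    intro m m' hmm hm'
    rcases eq_or_lt_of_le hmm with h | h
    · subst h; rfl
    · exact hpw m m' (by omega) hm' h
  rw [filter_card_eq_countP, ← hl, List.getD_eq_getElem l 0 hr']
  constructor
  · intro h
    have hsplit : l.countP (fun y => decide (y ≤ x)) =
        (l.take (r+1)).countP (fun y => decide (y ≤ x)) +
        (l.drop (r+1)).countP (fun y => decide (y ≤ x)) := by
      conv_lhs => rw [← List.take_append_drop (r+1) l]
      rw [List.countP_append]
    have htake : (l.take (r+1)).countP (fun y => decide (y ≤ x)) = r + 1 := by
      rw [List.countP_eq_length.mpr, List.length_take]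
      · omega
      · intro a ha
        obtain ⟨m, hm, hma⟩ := List.mem_iff_getElem.mp ha
        rw [List.length_take] at hm
        rw [List.getElem_take] at hma
        simp only [decide_eq_true_eq]
        subst hma
        exact le_trans (hmono m r (by omega) hr') h
    omega
  · intro h
    by_contra hx
    push_neg at hx
    have hsplit : l.countP (fun y => decide (y ≤ x)) =
        (l.take r).countP (fun y => decide (y ≤ x)) +
        (l.drop r).countP (fun y => decide (y ≤ x)) := by
      conv_lhs => rw [← List.take_append_drop r l]
      rw [List.countP_append]
    have hdrop : (l.drop r).countP (fun y => decide (y ≤ x)) = 0 := by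
      rw [List.countP_eq_zero]
      intro a ha
      obtain ⟨m, hm, hma⟩ := List.mem_iff_getElem.mp ha
      rw [List.getElem_drop] at hma
      simp only [decide_eq_true_eq]
      subst hma
      rw [List.length_drop] at hm
      have := hmono r (r + m) (by omega) (by omega)
      omega
    have htake : (l.take r).countP (fun y => decide (y ≤ x)) ≤ r := by
      calc (l.take r).countP (fun y => decide (y ≤ x)) ≤ (l.take r).length :=
            List.countP_le_length
        _ ≤ r := by rw [List.length_take]; omega
    omega

lemma standard_count {k n : ℕ} {I J : Finset ℕ} (h : IsStandardPair k n I J) (x : ℕ) :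
    (J.filter (· ≤ x)).card ≤ (I.filter (· ≤ x)).card := by
  obtain ⟨hIc, hJc, -, -, hle⟩ := h
  set c := (J.filter (· ≤ x)).card with hc
  rcases Nat.eq_zero_or_pos c with h0 | hpos
  · omega
  · have hcle : c ≤ k := by rw [← hJc]; exact Finset.card_filter_le J _
    have h1 : (J.sort (· ≤ ·)).getD (c-1) 0 ≤ x :=
      (sort_getD_le_iff J (c-1) x (by omega)).mpr (by omega)
    have h2 : (I.sort (· ≤ ·)).getD (c-1) 0 ≤ x := le_trans (hle (c-1) (by omega)) h1
    have h3 := (sort_getD_le_iff I (c-1) x (by omega)).mp h2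
    omega

set_option maxHeartbeats 2000000 in
/-- If `(i_a, j)` is a strand of `τ(II,J)` and swapping `i_a` with `j` yields a standard
pair, then there is a unique strand `(i_b, j')` of `τ(II,J)` under which `(i_a,j)` is
nested immediately; moreover the matching of the swapped pair is obtained from `τ` by
replacing the strands `(i_a,j)` and `(i_b,j')` by `(i_b,i_a)` and `(j,j')`. -/
theorem stmt_8 (k n : ℕ) (II : Fin k → ℕ) (J : Finset ℕ) (τ : Finset (ℕ × ℕ))
    (a : Fin k) (j : ℕ)
    (hM : Matching k n (Finset.univ.image II) J τ)
    (hstrand : (II a, j) ∈ τ)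
    (hstd : IsStandardPair k n (Finset.univ.image (Function.update II a j))
      (insert (II a) (J.erase j))) :
    (∃! pq : ℕ × ℕ, pq ∈ τ ∧ NestedImmediatelyUnder τ (II a, j) pq) ∧
    ∀ pq ∈ τ, NestedImmediatelyUnder τ (II a, j) pq →
      Matching k n (Finset.univ.image (Function.update II a j)) (insert (II a) (J.erase j))
        (insert (pq.1, II a) (insert (j, pq.2) ((τ.erase (II a, j)).erase pq))) := by
  classical
  set I : Finset ℕ := Finset.univ.image II with hIdef
  obtain ⟨⟨hlt, hT, hdist, hTd, hnc, hcard⟩, hIeq, hJeq⟩ := hM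
  set T : Finset ℕ := I ∩ J with hTdef
  have hij : II a < j := (hlt _ hstrand).1
  have hiT : II a ∉ T := (hTd _ hstrand).1
  have hjT : j ∉ T := (hTd _ hstrand).2
  have hiI : II a ∈ I := by
    rw [← hIeq]
    exact Finset.mem_union_right _ (Finset.mem_image.mpr ⟨(II a, j), hstrand, rfl⟩)
  have hjJ : j ∈ J := by
    rw [← hJeq]
    exact Finset.mem_union_right _ (Finset.mem_image.mpr ⟨(II a, j), hstrand, rfl⟩)
  have hjI : j ∉ I := by
    rw [← hIeq]
    intro h
    rcases Finset.mem_union.mp h with h | h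
    · exact hjT h
    · obtain ⟨u, hu, hu1⟩ := Finset.mem_image.mp h
      by_cases he : u = (II a, j)
      · subst he; simp at hu1; omega
      · exact (hdist u hu (II a, j) hstrand he).2.1 hu1
  have hiJ : II a ∉ J := by
    rw [← hJeq]
    intro h
    rcases Finset.mem_union.mp h with h | h
    · exact hiT h
    · obtain ⟨u, hu, hu1⟩ := Finset.mem_image.mp h
      by_cases he : u = (II a, j)
      · subst he; simp at hu1; omega
      · exact (hdist u hu (II a, j) hstrand he).2.2.1 hu1
  have hdisjTF : Disjoint T (τ.image Prod.fst) := by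
    rw [Finset.disjoint_left]
    rintro x hxT hxF
    obtain ⟨u, hu, rfl⟩ := Finset.mem_image.mp hxF
    exact (hTd u hu).1 hxT
  have hdisjTS : Disjoint T (τ.image Prod.snd) := by
    rw [Finset.disjoint_left]
    rintro x hxT hxF
    obtain ⟨u, hu, rfl⟩ := Finset.mem_image.mp hxF
    exact (hTd u hu).2 hxT
  have hfstInj : Set.InjOn Prod.fst (τ : Set (ℕ × ℕ)) := by
    intro u hu v hv h
    by_contra hne
    exact (hdist u hu v hv hne).1 h
  have hsndInj : Set.InjOn Prod.snd (τ : Set (ℕ × ℕ)) := by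
    intro u hu v hv h
    by_contra hne
    exact (hdist u hu v hv hne).2.2.2 h
  have hIcard : I.card = k := by
    rw [← hIeq, Finset.card_union_of_disjoint hdisjTF,
      Finset.card_image_of_injOn hfstInj]
    exact hcard
  have hinj : Function.Injective II := by
    have h1 : (Finset.univ.image II).card = (Finset.univ : Finset (Fin k)).card := by
      rw [← hIdef, hIcard, Finset.card_univ, Fintype.card_fin]
    have := Finset.injOn_of_card_image_eq h1
    rw [Finset.coe_univ] at this
    exact Set.injOn_univ.mp this
  have hImg : Finset.univ.image (Function.update II a j) = insert j (I.erase (II a)) := by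
    ext x
    simp only [Finset.mem_image, Finset.mem_univ, true_and, Finset.mem_insert,
      Finset.mem_erase, hIdef]
    constructor
    · rintro ⟨b, rfl⟩
      by_cases hb : b = a
      · subst hb; left; rw [Function.update_self]
      · right
        rw [Function.update_of_ne hb]
        exact ⟨fun h => hb (hinj h), ⟨b, by simp⟩⟩
    · rintro (rfl | ⟨hne, h⟩)
      · exact ⟨a, Function.update_self _ _ _⟩
      · obtain ⟨b, rfl⟩ := h
        have hb : b ≠ a := fun h => hne (by rw [h])
        exact ⟨b, Function.update_of_ne hb _ _⟩
  -- counting: there is an enclosing strand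
  have hcnt := standard_count hstd (II a)
  rw [hImg] at hcnt
  have hL : ((insert (II a) (J.erase j)).filter (· ≤ II a)).card
      = (J.filter (· ≤ II a)).card + 1 := by
    rw [Finset.filter_insert, if_pos le_rfl, Finset.card_insert_of_notMem, Finset.filter_erase,
      Finset.erase_eq_of_notMem]
    · intro h
      exact absurd (Finset.mem_filter.mp h).2 (by omega)
    · intro h
      exact hiJ (Finset.mem_of_mem_erase (Finset.mem_of_mem_filter _ h))
  have hR : ((insert j (I.erase (II a))).filter (· ≤ II a)).card + 1
      = (I.filter (· ≤ II a)).card := by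
    rw [Finset.filter_insert, if_neg (by omega), Finset.filter_erase,
      Finset.card_erase_of_mem (a := II a) (s := I.filter (· ≤ II a))
        (Finset.mem_filter.mpr ⟨hiI, le_rfl⟩)]
    have : 0 < (I.filter (· ≤ II a)).card :=
      Finset.card_pos.mpr ⟨II a, Finset.mem_filter.mpr ⟨hiI, le_rfl⟩⟩
    omega
  have hIfil : (I.filter (· ≤ II a)).card
      = (T.filter (· ≤ II a)).card + (τ.filter (fun p => p.1 ≤ II a)).card := by
    rw [← hIeq, Finset.filter_union,
      Finset.card_union_of_disjoint (Finset.disjoint_filter_filter hdisjTF),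
      Finset.filter_image, Finset.card_image_of_injOn
        (hfstInj.mono (by exact_mod_cast Finset.filter_subset _ _))]
  have hJfil : (J.filter (· ≤ II a)).card
      = (T.filter (· ≤ II a)).card + (τ.filter (fun p => p.2 ≤ II a)).card := by
    rw [← hJeq, Finset.filter_union,
      Finset.card_union_of_disjoint (Finset.disjoint_filter_filter hdisjTS),
      Finset.filter_image, Finset.card_image_of_injOn
        (hsndInj.mono (by exact_mod_cast Finset.filter_subset _ _))]
  have hBsplit := Finset.card_filter_add_card_filter_not
    (s := τ.filter (fun p => p.1 ≤ II a)) (p := fun p => p.2 ≤ II a)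
  rw [Finset.filter_filter, Finset.filter_filter] at hBsplit
  have hsubeq : τ.filter (fun p => p.1 ≤ II a ∧ p.2 ≤ II a)
      = τ.filter (fun p => p.2 ≤ II a) := by
    apply Finset.filter_congr
    intro u hu
    have := (hlt u hu).1
    constructor
    · rintro ⟨-, h⟩; exact h
    · intro h; exact ⟨by omega, h⟩
  rw [hsubeq] at hBsplit
  have hB2 : 2 ≤ (τ.filter (fun p => p.1 ≤ II a ∧ ¬p.2 ≤ II a)).card := by omega
  obtain ⟨t0, ht0B, ht0ne⟩ :=
    Finset.exists_mem_ne
      (s := τ.filter (fun p => p.1 ≤ II a ∧ ¬p.2 ≤ II a)) (by omega) (II a, j)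
  rw [Finset.mem_filter] at ht0B
  obtain ⟨ht0τ, ht01, ht02⟩ := ht0B
  have hd0 := hdist t0 ht0τ (II a, j) hstrand ht0ne
  have ht0enc : t0.1 < II a ∧ j < t0.2 := by
    have h1 : t0.1 < II a := by have := hd0.1; omega
    have h2 : ¬(t0.1 < II a ∧ II a < t0.2 ∧ t0.2 < j) := hnc t0 ht0τ (II a, j) hstrand
    have := hd0.2.2.2
    constructor
    · exact h1
    · omega
  -- the set of enclosing strands
  have hEne : (τ.filter (fun u => u.1 < II a ∧ j < u.2)).Nonempty :=
    ⟨t0, Finset.mem_filter.mpr ⟨ht0τ, ht0enc⟩⟩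
  obtain ⟨tst, htstE, htstmax⟩ :=
    Finset.exists_max_image (τ.filter (fun u => u.1 < II a ∧ j < u.2)) (fun u => u.1) hEne
  rw [Finset.mem_filter] at htstE
  obtain ⟨htstτ, htst1, htst2⟩ := htstE
  have htstNIU : NestedImmediatelyUnder τ (II a, j) tst := by
    refine ⟨htstτ, ⟨htst1, htst2⟩, ?_⟩
    rintro ⟨u, huτ, ⟨hn1, hn2⟩, ⟨hn3, hn4⟩⟩
    have := htstmax u (Finset.mem_filter.mpr ⟨huτ, by exact hn1, by exact hn2⟩)
    omega
  -- uniqueness of the immediate enclosing strand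
  have huniq : ∀ y : ℕ × ℕ, y ∈ τ ∧ NestedImmediatelyUnder τ (II a, j) y → y = tst := by
    rintro y ⟨hyτ, hyτ', ⟨hy1, hy2⟩, hymid⟩
    by_contra hne
    have hd := hdist y hyτ tst htstτ hne
    simp only [Nested] at hy1 hy2
    rcases lt_or_gt_of_ne hd.1 with h | h
    · -- y.1 < tst.1 : tst nested under y
      have h2 : ¬(y.1 < tst.1 ∧ tst.1 < y.2 ∧ y.2 < tst.2) := hnc y hyτ tst htstτ
      have h3 : tst.2 < y.2 := by
        have h2' : ¬(y.2 < tst.2) := fun hh => h2 ⟨h, by omega, hh⟩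
        have := hd.2.2.2
        omega
      exact hymid ⟨tst, htstτ, ⟨htst1, htst2⟩, ⟨h, h3⟩⟩
    · -- tst.1 < y.1 : y nested under tst
      have h2 : ¬(tst.1 < y.1 ∧ y.1 < tst.2 ∧ tst.2 < y.2) := hnc tst htstτ y hyτ
      have h3 : y.2 < tst.2 := by
        have h2' : ¬(y.1 < tst.2 ∧ tst.2 < y.2) := fun hh => h2 ⟨h, hh.1, hh.2⟩
        have h2'' : ¬(tst.2 < y.2) := fun hh => h2' ⟨by omega, hh⟩
        have := hd.2.2.2
        omega
      exact htstNIU.2.2 ⟨y, hyτ, ⟨hy1, hy2⟩, ⟨h, h3⟩⟩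
  refine ⟨⟨tst, ⟨htstτ, htstNIU⟩, huniq⟩, ?_⟩
  -- Part 2
  intro pq hpqτ hpqNIU
  obtain ⟨-, ⟨hbi, hjc⟩, himm⟩ := hpqNIU
  simp only [Nested] at hbi hjc
  have hpqne : pq ≠ (II a, j) := by
    intro h; rw [h] at hbi; exact absurd hbi (lt_irrefl _)
  have hdpq := hdist pq hpqτ (II a, j) hstrand hpqne
  have hbc : pq.1 < pq.2 := (hlt pq hpqτ).1
  set τ' : Finset (ℕ × ℕ) :=
    insert (pq.1, II a) (insert (j, pq.2) ((τ.erase (II a, j)).erase pq)) with hτ'def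
  have hmem' : ∀ u : ℕ × ℕ, u ∈ τ' ↔
      u = (pq.1, II a) ∨ u = (j, pq.2) ∨ (u ∈ τ ∧ u ≠ (II a, j) ∧ u ≠ pq) := by
    intro u
    simp only [hτ'def, Finset.mem_insert, Finset.mem_erase]
    tauto
  -- key noncrossing facts using immediacy
  have hkey1 : ∀ u ∈ τ, u ≠ (II a, j) → u ≠ pq →
      ¬(pq.1 < u.1 ∧ u.1 < II a ∧ II a < u.2) := by
    rintro u huτ hne1 hne2 ⟨h1, h2, h3⟩
    have d1 := hdist u huτ (II a, j) hstrand hne1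
    have d2 := hdist u huτ pq hpqτ hne2
    have hn1 : ¬(u.1 < II a ∧ II a < u.2 ∧ u.2 < j) := hnc u huτ (II a, j) hstrand
    have h4 : j < u.2 := by
      have := d1.2.2.2
      by_contra h; push_neg at h
      exact hn1 ⟨h2, h3, by omega⟩
    have hn2 : ¬(pq.1 < u.1 ∧ u.1 < pq.2 ∧ pq.2 < u.2) := hnc pq hpqτ u huτ
    have h5 : u.2 < pq.2 := by
      have := d2.2.2.2
      by_contra h; push_neg at h
      exact hn2 ⟨h1, by omega, by omega⟩
    exact himm ⟨u, huτ, ⟨h2, h4⟩, ⟨h1, h5⟩⟩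
  have hkey2 : ∀ u ∈ τ, u ≠ (II a, j) → u ≠ pq →
      ¬(u.1 < j ∧ j < u.2 ∧ u.2 < pq.2) := by
    rintro u huτ hne1 hne2 ⟨h1, h2, h3⟩
    have d1 := hdist u huτ (II a, j) hstrand hne1
    have d2 := hdist u huτ pq hpqτ hne2
    have hu1i : u.1 ≠ II a := d1.1
    rcases lt_or_gt_of_ne hu1i with h4 | h4
    · have hu1b : u.1 ≠ pq.1 := d2.1
      rcases lt_or_gt_of_ne hu1b with h5 | h5
      · exact hnc u huτ pq hpqτ ⟨h5, by omega, h3⟩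
      · exact himm ⟨u, huτ, ⟨h4, h2⟩, ⟨h5, h3⟩⟩
    · exact hnc (II a, j) hstrand u huτ ⟨h4, h1, h2⟩
  have hbiτ : (pq.1, II a) ∉ τ := by
    intro h
    exact (hdist (pq.1, II a) h (II a, j) hstrand
      (by intro he; rw [Prod.ext_iff] at he; simp at he; omega)).2.2.1 rfl
  have hjcτ : (j, pq.2) ∉ τ := by
    intro h
    exact (hdist (j, pq.2) h (II a, j) hstrand
      (by intro he; rw [Prod.ext_iff] at he; simp at he; omega)).2.1 rfl
  have hτ'card : τ'.card = τ.card := by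
    have h1 : 1 < τ.card := Finset.one_lt_card.mpr ⟨pq, hpqτ, (II a, j), hstrand, hpqne⟩
    rw [hτ'def, Finset.card_insert_of_notMem, Finset.card_insert_of_notMem,
      Finset.card_erase_of_mem (Finset.mem_erase.mpr ⟨hpqne, hpqτ⟩),
      Finset.card_erase_of_mem hstrand]
    · omega
    · intro h
      exact hjcτ (Finset.mem_of_mem_erase (Finset.mem_of_mem_erase h))
    · intro h
      rcases Finset.mem_insert.mp h with h | h
      · rw [Prod.ext_iff] at h; simp at h; omega
      · exact hbiτ (Finset.mem_of_mem_erase (Finset.mem_of_mem_erase h))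
  have hT' : insert j (I.erase (II a)) ∩ insert (II a) (J.erase j) = T := by
    ext x
    simp only [Finset.mem_inter, Finset.mem_insert, Finset.mem_erase, hTdef]
    constructor
    · rintro ⟨h1, h2⟩
      rcases h1 with rfl | ⟨hxi, hxI⟩
      · rcases h2 with h | ⟨hxj, -⟩
        · omega
        · exact absurd rfl hxj
      · rcases h2 with rfl | ⟨hxj, hxJ⟩
        · exact absurd rfl hxi
        · exact ⟨hxI, hxJ⟩
    · intro hxT
      obtain ⟨hxI, hxJ⟩ := hxT
      have hxi : x ≠ II a := fun h => hiJ (h ▸ hxJ)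
      have hxj : x ≠ j := fun h => hjI (h ▸ hxI)
      exact ⟨Or.inr ⟨hxi, hxI⟩, Or.inr ⟨hxj, hxJ⟩⟩
  rw [show Finset.univ.image (Function.update II a j) = insert j (I.erase (II a)) from hImg]
  refine ⟨?_, ?_, ?_⟩
  · -- IsPNP
    rw [hT']
    refine ⟨?_, hT, ?_, ?_, ?_, ?_⟩
    · -- bounds
      intro p hp
      rcases (hmem' p).mp hp with rfl | rfl | ⟨hpτ, -, -⟩
      · exact ⟨hbi, (hlt pq hpqτ).2.1, (hlt _ hstrand).2.1⟩
      · exact ⟨hjc, (hlt _ hstrand).2.2, (hlt pq hpqτ).2.2⟩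
      · exact hlt p hpτ
    · -- distinct endpoints
      intro p hp q hq hne
      rcases (hmem' p).mp hp with rfl | rfl | ⟨hpτ, hp1, hp2⟩ <;>
        rcases (hmem' q).mp hq with rfl | rfl | ⟨hqτ, hq1, hq2⟩
      · exact absurd rfl hne
      · simp only; omega
      · have d1 := hdist q hqτ (II a, j) hstrand hq1
        have d2 := hdist q hqτ pq hpqτ hq2
        simp only [ne_eq] at d1 d2 ⊢
        exact ⟨fun h => d2.1 h.symm, fun h => d2.2.2.1 h.symm,
          fun h => d1.1 h.symm, fun h => d1.2.2.1 h.symm⟩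
      · simp only; omega
      · exact absurd rfl hne
      · have d1 := hdist q hqτ (II a, j) hstrand hq1
        have d2 := hdist q hqτ pq hpqτ hq2
        simp only [ne_eq] at d1 d2 ⊢
        exact ⟨fun h => d1.2.1 h.symm, fun h => d1.2.2.2 h.symm,
          fun h => d2.2.1 h.symm, fun h => d2.2.2.2 h.symm⟩
      · have d1 := hdist p hpτ (II a, j) hstrand hp1
        have d2 := hdist p hpτ pq hpqτ hp2
        simp only [ne_eq] at d1 d2 ⊢
        exact ⟨d2.1, d1.1, d2.2.2.1, d1.2.2.1⟩
      · have d1 := hdist p hpτ (II a, j) hstrand hp1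
        have d2 := hdist p hpτ pq hpqτ hp2
        simp only [ne_eq] at d1 d2 ⊢
        exact ⟨d1.2.1, d2.2.1, d1.2.2.2, d2.2.2.2⟩
      · exact hdist p hpτ q hqτ hne
    · -- endpoints not in T
      intro p hp
      rcases (hmem' p).mp hp with rfl | rfl | ⟨hpτ, -, -⟩
      · exact ⟨(hTd pq hpqτ).1, (hTd _ hstrand).1⟩
      · exact ⟨(hTd _ hstrand).2, (hTd pq hpqτ).2⟩
      · exact hTd p hpτ
    · -- noncrossing
      intro p hp q hq
      rcases (hmem' p).mp hp with rfl | rfl | ⟨hpτ, hp1, hp2⟩ <;>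
        rcases (hmem' q).mp hq with rfl | rfl | ⟨hqτ, hq1, hq2⟩
      · simp only; omega
      · simp only; omega
      · exact hkey1 q hqτ hq1 hq2
      · simp only; omega
      · simp only; omega
      · -- (j, pq.2) vs q
        rintro ⟨h1, h2, h3⟩
        exact hnc pq hpqτ q hqτ ⟨by omega, h2, h3⟩
      · -- p vs (pq.1, II a)
        rintro ⟨h1, h2, h3⟩
        exact hnc p hpτ pq hpqτ ⟨h1, h2, by omega⟩
      · exact hkey2 p hpτ hp1 hp2
      · exact hnc p hpτ q hqτ
    · -- cardinality
      rw [hτ'card]; exact hcard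
  · -- T ∪ firsts = I'
    rw [hT']
    ext x
    simp only [Finset.mem_union, Finset.mem_image, Finset.mem_insert, Finset.mem_erase]
    constructor
    · rintro (hxT | ⟨u, hu, rfl⟩)
      · have hxI : x ∈ I := by rw [← hIeq]; exact Finset.mem_union_left _ hxT
        exact Or.inr ⟨fun h => hiT (h ▸ hxT), hxI⟩
      · rcases (hmem' u).mp hu with rfl | rfl | ⟨huτ, hne1, hne2⟩
        · refine Or.inr ⟨by simp only; omega, ?_⟩
          rw [← hIeq]
          exact Finset.mem_union_right _ (Finset.mem_image.mpr ⟨pq, hpqτ, rfl⟩)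
        · exact Or.inl rfl
        · refine Or.inr ⟨(hdist u huτ (II a, j) hstrand hne1).1, ?_⟩
          rw [← hIeq]
          exact Finset.mem_union_right _ (Finset.mem_image.mpr ⟨u, huτ, rfl⟩)
    · rintro (rfl | ⟨hne, hxI⟩)
      · exact Or.inr ⟨(x, pq.2), (hmem' _).mpr (Or.inr (Or.inl rfl)), rfl⟩
      · rw [← hIeq] at hxI
        rcases Finset.mem_union.mp hxI with hxT | hxF
        · exact Or.inl hxT
        · obtain ⟨u, huτ, rfl⟩ := Finset.mem_image.mp hxF
          by_cases h1 : u = (II a, j)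
          · subst h1; exact absurd rfl hne
          · by_cases h2 : u = pq
            · subst h2
              exact Or.inr ⟨(u.1, II a), (hmem' _).mpr (Or.inl rfl), rfl⟩
            · exact Or.inr ⟨u, (hmem' _).mpr (Or.inr (Or.inr ⟨huτ, h1, h2⟩)), rfl⟩
  · -- T ∪ seconds = J'
    rw [hT']
    ext x
    simp only [Finset.mem_union, Finset.mem_image, Finset.mem_insert, Finset.mem_erase]
    constructor
    · rintro (hxT | ⟨u, hu, rfl⟩)
      · have hxJ : x ∈ J := by rw [← hJeq]; exact Finset.mem_union_left _ hxT
        exact Or.inr ⟨fun h => hjT (h ▸ hxT), hxJ⟩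
      · rcases (hmem' u).mp hu with rfl | rfl | ⟨huτ, hne1, hne2⟩
        · exact Or.inl rfl
        · refine Or.inr ⟨by simp only; omega, ?_⟩
          rw [← hJeq]
          exact Finset.mem_union_right _ (Finset.mem_image.mpr ⟨pq, hpqτ, rfl⟩)
        · refine Or.inr ⟨(hdist u huτ (II a, j) hstrand hne1).2.2.2, ?_⟩
          rw [← hJeq]
          exact Finset.mem_union_right _ (Finset.mem_image.mpr ⟨u, huτ, rfl⟩)
    · rintro (rfl | ⟨hne, hxJ⟩)
      · exact Or.inr ⟨(pq.1, II a), (hmem' _).mpr (Or.inl rfl), rfl⟩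
      · rw [← hJeq] at hxJ
        rcases Finset.mem_union.mp hxJ with hxT | hxS
        · exact Or.inl hxT
        · obtain ⟨u, huτ, rfl⟩ := Finset.mem_image.mp hxS
          by_cases h1 : u = (II a, j)
          · subst h1; exact absurd rfl hne
          · by_cases h2 : u = pq
            · subst h2
              exact Or.inr ⟨(j, u.2), (hmem' _).mpr (Or.inr (Or.inl rfl)), rfl⟩
            · exact Or.inr ⟨u, (hmem' _).mpr (Or.inr (Or.inr ⟨huτ, h1, h2⟩)), rfl⟩
end
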